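/- arXiv:2005.08292 — 6 statements merged into one kernel-verified Lean document; each statement's English description precedes it below -/
import Mathlib

section
/- There exists an integer n₀ such that for all integers n ≥ n₀ one has I(n) < I(n+1). -/
open MeasureTheory Real

open Set Filter Topology

/-- `I n = (2√n/π) ∫₀^∞ ((sin t)/t)^n dt`. -/
noncomputable def I (n : ℕ) : ℝ :=
  2 * Real.sqrt n / Real.pi * ∫ t in Set.Ioi (0 : ℝ), (Real.sin t / t) ^ n

/-- `log y ≤ sinh (log y) = (y - 1/y)/2` for `y ≥ 1`. -/
lemma log_le_half (y : ℝ) (hy : 1 ≤ y) : Real.log y ≤ (y - y⁻¹) / 2 := by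
  rcases eq_or_lt_of_le hy with h | h
  · simp [← h]
  · rw [← Real.sinh_log (by linarith)]
    have h0 : 0 < Real.log y := Real.log_pos h
    exact (Real.self_lt_sinh_iff.mpr h0).le

lemma p_nonneg {v : ℝ} (h0 : 0 ≤ v) (h1 : v < 1) :
    v ^ 2 / 2 ≤ v / (1 - v) + Real.log (1 - v) := by
  have h1v : (0:ℝ) < 1 - v := by linarith
  set y : ℝ := (1 - v)⁻¹ with hy
  have hy1 : 1 ≤ y := by
    rw [hy, le_inv_comm₀ one_pos h1v]; · simpa using h0
  have hlog : Real.log (1 - v) = - Real.log y := by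
    rw [hy, Real.log_inv]; ring
  have hv : v / (1 - v) = y - 1 := by
    rw [hy]; field_simp; ring
  have key := log_le_half y hy1
  have hyinv : y⁻¹ = 1 - v := by rw [hy, inv_inv]
  have hypos : 0 < y := lt_of_lt_of_le one_pos hy1
  rw [hlog, hv]
  -- need : v^2/2 ≤ y - 1 - log y, with log y ≤ (y - (1-v))/2, v = 1 - 1/y
  have hvy : v = 1 - y⁻¹ := by rw [hyinv]; ring
  rw [hyinv] at key
  -- v^2/2 ≤ y - 1 - (y - (1 - v))/2  given v = 1 - y⁻¹, i.e. (y-1) = v*y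
  have hvyy : v * y = y - 1 := by
    rw [hvy]; field_simp
  nlinarith [sq_nonneg (y - 1), sq_nonneg v, mul_pos hypos hypos,
    sq_nonneg (v*(y-1))]

/-- the function h -/
noncomputable def hfun (v : ℝ) : ℝ := -Real.log (1 - v) / v - v / 2

lemma hfun_hasDeriv {v : ℝ} (h0 : 0 < v) (h1 : v < 1) :
    HasDerivAt hfun ((v * (1 - v))⁻¹ + Real.log (1 - v) / v ^ 2 - 1 / 2) v := by
  have h1v : (1:ℝ) - v ≠ 0 := by intro h; rw [sub_eq_zero] at h; exact absurd h.symm (ne_of_lt h1)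
  have hd1 : HasDerivAt (fun v : ℝ => Real.log (1 - v)) ((1 - v)⁻¹ * (-1)) v := by
    exact (Real.hasDerivAt_log h1v).comp v ((hasDerivAt_id v).const_sub 1) |>.congr_deriv rfl
  have hd2 : HasDerivAt (fun v : ℝ => -Real.log (1 - v)) ((1 - v)⁻¹) v := by
    exact hd1.neg.congr_deriv (by ring)
  have hd3 : HasDerivAt (fun v : ℝ => v⁻¹) (-(v ^ 2)⁻¹) v := by
    simpa using (hasDerivAt_inv (ne_of_gt h0))
  have hd4 : HasDerivAt (fun v : ℝ => -Real.log (1 - v) * v⁻¹)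
      ((1 - v)⁻¹ * v⁻¹ + (-Real.log (1 - v)) * (-(v ^ 2)⁻¹)) v := hd2.mul hd3
  have hd5 : HasDerivAt (fun v : ℝ => v / 2) (1 / 2) v := by
    simpa using (hasDerivAt_id v).div_const 2
  have := hd4.sub hd5
  have heq : (fun v : ℝ => -Real.log (1 - v) * v⁻¹ - v / 2) = hfun := by
    funext w; simp [hfun, div_eq_mul_inv]
  rw [show ((fun v : ℝ => -Real.log (1 - v) * v⁻¹) - fun v : ℝ => v / 2) = hfun from heq] at this
  refine this.congr_deriv ?_
  have hv2 : (v:ℝ) ^ 2 ≠ 0 := pow_ne_zero 2 (ne_of_gt h0)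
  rw [mul_inv]; ring

lemma hfun_mono : MonotoneOn hfun (Set.Ioo (0:ℝ) 1) := by
  have hint : interior (Set.Ioo (0:ℝ) 1) = Set.Ioo 0 1 := interior_Ioo
  apply monotoneOn_of_deriv_nonneg (convex_Ioo 0 1)
  · intro v hv
    exact (hfun_hasDeriv hv.1 hv.2).continuousAt.continuousWithinAt
  · rw [hint]
    intro v hv
    exact (hfun_hasDeriv hv.1 hv.2).differentiableAt.differentiableWithinAt
  · rw [hint]
    intro v hv
    rw [(hfun_hasDeriv hv.1 hv.2).deriv]
    have h0 := hv.1; have h1 := hv.2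
    have h1v : (0:ℝ) < 1 - v := by linarith
    have hp := p_nonneg h0.le h1
    have hv2 : (0:ℝ) < v ^ 2 := by positivity
    have key : 0 ≤ (v / (1 - v) + Real.log (1 - v) - v ^ 2 / 2) / v ^ 2 := div_nonneg (by linarith) hv2.le
    have : (v / (1 - v) + Real.log (1 - v) - v ^ 2 / 2) / v ^ 2
        = (v * (1 - v))⁻¹ + Real.log (1 - v) / v ^ 2 - 1 / 2 := by
      field_simp
    linarith [this ▸ key]

/-- main elementary inequality: for 0 < v ≤ w < 1,
`-log(1-v)/v + (w-v)/2 ≤ -log(1-w)/w`. -/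
lemma g_gain {v w : ℝ} (h0 : 0 < v) (hvw : v ≤ w) (h1 : w < 1) :
    -Real.log (1 - v) / v + (w - v) / 2 ≤ -Real.log (1 - w) / w := by
  have := hfun_mono (Set.mem_Ioo.mpr ⟨h0, lt_of_le_of_lt hvw h1⟩)
    (Set.mem_Ioo.mpr ⟨lt_of_lt_of_le h0 hvw, h1⟩) hvw
  simp only [hfun] at this
  linarith

noncomputable def Ffun (x : ℝ) : ℝ := -Real.log (Real.sin x / x) / x ^ 2

lemma sin_div_pos {y : ℝ} (h0 : 0 < y) (h1 : y < Real.pi) : 0 < Real.sin y / y :=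
  div_pos (Real.sin_pos_of_pos_of_lt_pi h0 h1) h0

lemma tendsto_log_sum {y : ℝ} (h0 : 0 < y) (h1 : y < Real.pi) :
    Tendsto (fun N : ℕ => ∑ j ∈ Finset.range N,
        Real.log (1 - y ^ 2 / (Real.pi ^ 2 * ((j : ℝ) + 1) ^ 2)))
      atTop (𝓝 (Real.log (Real.sin y / y))) := by
  have hπ : (0:ℝ) < Real.pi := Real.pi_pos
  have h1' := Real.tendsto_euler_sin_prod (y / Real.pi)
  have hy : Real.pi * (y / Real.pi) = y := by field_simp
  rw [hy] at h1'
  -- rewrite factors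
  have hfac : ∀ j : ℕ, (1 : ℝ) - (y / Real.pi) ^ 2 / ((j : ℝ) + 1) ^ 2
      = 1 - y ^ 2 / (Real.pi ^ 2 * ((j : ℝ) + 1) ^ 2) := by
    intro j
    rw [div_pow, div_div]
  have hfacpos : ∀ j : ℕ, (0:ℝ) < 1 - y ^ 2 / (Real.pi ^ 2 * ((j : ℝ) + 1) ^ 2) := by
    intro j
    have hj1 : (1:ℝ) ≤ ((j : ℝ) + 1) ^ 2 := by
      have h' : (0:ℝ) ≤ (j : ℝ) := Nat.cast_nonneg j
      have : (1:ℝ) ≤ (j : ℝ) + 1 := by linarith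
      nlinarith
    have hlt : y ^ 2 < Real.pi ^ 2 * ((j : ℝ) + 1) ^ 2 := by
      nlinarith [sq_nonneg y]
    have hpos : (0:ℝ) < Real.pi ^ 2 * ((j : ℝ) + 1) ^ 2 := by positivity
    rw [sub_pos, div_lt_one hpos]
    exact hlt
  have h2 : Tendsto (fun n : ℕ => ∏ j ∈ Finset.range n,
      ((1:ℝ) - y ^ 2 / (Real.pi ^ 2 * ((j : ℝ) + 1) ^ 2))) atTop (𝓝 (Real.sin y / y)) := by
    have h3 : Tendsto (fun n : ℕ => (y * ∏ j ∈ Finset.range n,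
        ((1:ℝ) - y ^ 2 / (Real.pi ^ 2 * ((j : ℝ) + 1) ^ 2))) / y) atTop (𝓝 (Real.sin y / y)) := by
      apply Tendsto.div_const
      convert h1' using 2 with n
      congr 1
      exact (Finset.prod_congr rfl fun j _ => (hfac j).symm)
    simpa only [mul_div_cancel_left₀ _ (ne_of_gt h0)] using h3
  have hcont := (Real.continuousAt_log (ne_of_gt (sin_div_pos h0 h1))).tendsto.comp h2
  convert hcont using 2 with N
  simp only [Function.comp_apply]
  rw [Real.log_prod (fun j _ => ne_of_gt (hfacpos j))]

lemma term_gain {x y : ℝ} (h0 : 0 < x) (hxy : x ≤ y) (h1 : y < Real.pi) (k : ℕ) :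
    -Real.log (1 - x ^ 2 / (Real.pi ^ 2 * ((k : ℝ) + 1) ^ 2)) / x ^ 2
      + (y ^ 2 - x ^ 2) / (2 * (Real.pi ^ 2 * ((k : ℝ) + 1) ^ 2) ^ 2)
    ≤ -Real.log (1 - y ^ 2 / (Real.pi ^ 2 * ((k : ℝ) + 1) ^ 2)) / y ^ 2 := by
  have hπ : (0:ℝ) < Real.pi := Real.pi_pos
  set a : ℝ := Real.pi ^ 2 * ((k : ℝ) + 1) ^ 2 with ha
  have hapos : 0 < a := by positivity
  have hy0 : 0 < y := lt_of_lt_of_le h0 hxy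
  have hj1 : (1:ℝ) ≤ ((k : ℝ) + 1) ^ 2 := by
    have h' : (0:ℝ) ≤ (k : ℝ) := Nat.cast_nonneg k
    have : (1:ℝ) ≤ (k : ℝ) + 1 := by linarith
    nlinarith
  have hya : y ^ 2 < a := by rw [ha]; nlinarith [sq_nonneg y]
  set v : ℝ := x ^ 2 / a with hv
  set w : ℝ := y ^ 2 / a with hw
  have hv0 : 0 < v := by positivity
  have hvw : v ≤ w := by
    rw [hv, hw]
    gcongr
  have hw1 : w < 1 := by
    rw [hw, div_lt_one hapos]; exact hya
  have key := g_gain hv0 hvw hw1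
  have hx2 : (0:ℝ) < x ^ 2 := by positivity
  have hy2 : (0:ℝ) < y ^ 2 := by positivity
  have e1 : -Real.log (1 - v) / v = (-Real.log (1 - v) / x ^ 2) * a := by
    rw [hv]; field_simp; try ring
  have e2 : -Real.log (1 - w) / w = (-Real.log (1 - w) / y ^ 2) * a := by
    rw [hw]; field_simp; try ring
  have e3 : (w - v) / 2 = ((y ^ 2 - x ^ 2) / (2 * a ^ 2)) * a := by
    rw [hv, hw]; field_simp; try ring
  rw [e1, e2, e3] at key
  have := (add_mul _ _ a) ▸ key
  have h4 : (-Real.log (1 - v) / x ^ 2 + (y ^ 2 - x ^ 2) / (2 * a ^ 2))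
      ≤ -Real.log (1 - w) / y ^ 2 := le_of_mul_le_mul_right (by linarith) hapos
  rw [hv, hw] at h4
  exact h4

lemma F_gain {x y : ℝ} (h0 : 0 < x) (hxy : x < y) (h1 : y < Real.pi) :
    Ffun x + (y ^ 2 - x ^ 2) / (2 * Real.pi ^ 4) ≤ Ffun y := by
  have hπ : (0:ℝ) < Real.pi := Real.pi_pos
  have hy0 : 0 < y := lt_trans h0 hxy
  have hx1 : x < Real.pi := lt_trans hxy h1
  -- terms
  set tx : ℕ → ℝ := fun j => -Real.log (1 - x ^ 2 / (Real.pi ^ 2 * ((j : ℝ) + 1) ^ 2)) / x ^ 2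
  set ty : ℕ → ℝ := fun j => -Real.log (1 - y ^ 2 / (Real.pi ^ 2 * ((j : ℝ) + 1) ^ 2)) / y ^ 2
  have hTx : Tendsto (fun N : ℕ => ∑ j ∈ Finset.range N, tx j) atTop (𝓝 (Ffun x)) := by
    have := ((tendsto_log_sum h0 hx1).neg).div_const (x ^ 2)
    convert this using 2 with N
    simp only [tx, Finset.sum_div, ← Finset.sum_neg_distrib, neg_div]
    rfl
  have hTy : Tendsto (fun N : ℕ => ∑ j ∈ Finset.range N, ty j) atTop (𝓝 (Ffun y)) := by
    have := ((tendsto_log_sum hy0 h1).neg).div_const (y ^ 2)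
    convert this using 2 with N
    simp only [ty, Finset.sum_div, ← Finset.sum_neg_distrib, neg_div]
    rfl
  -- per-N inequality (for N = M+1)
  have key : ∀ M : ℕ, (∑ j ∈ Finset.range (M + 1), tx j) + (y ^ 2 - x ^ 2) / (2 * Real.pi ^ 4)
      ≤ ∑ j ∈ Finset.range (M + 1), ty j := by
    intro M
    rw [Finset.sum_range_succ' tx, Finset.sum_range_succ' ty]
    have h00 : tx 0 + (y ^ 2 - x ^ 2) / (2 * Real.pi ^ 4) ≤ ty 0 := by
      have h := term_gain h0 hxy.le h1 0
      have he : ((Real.pi ^ 2 * (((0:ℕ) : ℝ) + 1) ^ 2) ^ 2) = Real.pi ^ 4 := by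
        push_cast; ring
      rw [he] at h
      simpa [tx, ty] using h
    have hsum : (∑ j ∈ Finset.range M, tx (j + 1)) ≤ ∑ j ∈ Finset.range M, ty (j + 1) := by
      apply Finset.sum_le_sum
      intro j _
      have := term_gain h0 hxy.le h1 (j + 1)
      have hga : 0 ≤ (y ^ 2 - x ^ 2) / (2 * (Real.pi ^ 2 * (((j:ℕ)+1 : ℝ) + 1) ^ 2) ^ 2) := by
        apply div_nonneg _ (by positivity)
        nlinarith [hxy, h0]
      simp only [tx, ty]
      push_cast at this ⊢
      linarith
    linarith
  -- pass to the limit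
  have hTx' : Tendsto (fun M : ℕ => (∑ j ∈ Finset.range (M + 1), tx j)
      + (y ^ 2 - x ^ 2) / (2 * Real.pi ^ 4)) atTop
      (𝓝 (Ffun x + (y ^ 2 - x ^ 2) / (2 * Real.pi ^ 4))) := by
    apply Tendsto.add_const
    exact hTx.comp (tendsto_add_atTop_nat 1)
  have hTy' : Tendsto (fun M : ℕ => ∑ j ∈ Finset.range (M + 1), ty j) atTop (𝓝 (Ffun y)) :=
    hTy.comp (tendsto_add_atTop_nat 1)
  exact le_of_tendsto_of_tendsto' hTx' hTy' key

noncomputable def G (n : ℕ) (s : ℝ) : ℝ :=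
  (Real.sin (s / Real.sqrt n) / (s / Real.sqrt n)) ^ n

lemma sqrt_n_pos {n : ℕ} (hn : 1 ≤ n) : 0 < Real.sqrt n := by
  apply Real.sqrt_pos.mpr
  exact_mod_cast Nat.pos_of_ne_zero (by omega)

lemma G_abs_le_one {n : ℕ} (hn : 1 ≤ n) {s : ℝ} (hs : 0 < s) : |G n s| ≤ 1 := by
  have hy : 0 < s / Real.sqrt n := div_pos hs (sqrt_n_pos hn)
  rw [G, abs_pow]
  apply pow_le_one₀ (abs_nonneg _)
  rw [abs_div]
  rw [div_le_one (by simpa using abs_pos.mpr (ne_of_gt hy))]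
  exact Real.abs_sin_le_abs

lemma G_eq_exp {n : ℕ} (hn : 1 ≤ n) {s : ℝ} (hs : 0 < s)
    (hsπ : s < Real.pi * Real.sqrt n) :
    G n s = Real.exp (-(s ^ 2) * Ffun (s / Real.sqrt n)) := by
  have hsn := sqrt_n_pos hn
  set y := s / Real.sqrt n with hy
  have hy0 : 0 < y := div_pos hs hsn
  have hyπ : y < Real.pi := by
    rw [hy, div_lt_iff₀ hsn]; linarith [hsπ]
  have hsin : 0 < Real.sin y / y := div_pos (Real.sin_pos_of_pos_of_lt_pi hy0 hyπ) hy0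
  have hs2 : s ^ 2 = n * y ^ 2 := by
    rw [hy, div_pow, Real.sq_sqrt (Nat.cast_nonneg n)]
    field_simp
  rw [G, ← Real.exp_log hsin, ← Real.exp_nat_mul]
  congr 1
  rw [Ffun, hs2]
  have hy2 : y ^ 2 ≠ 0 := by positivity
  field_simp
lemma G_nonneg {n : ℕ} (hn : 1 ≤ n) {s : ℝ} (hs : 0 < s)
    (hsπ : s ≤ Real.pi * Real.sqrt n) : 0 ≤ G n s := by
  have hsn := sqrt_n_pos hn
  have hy0 : 0 < s / Real.sqrt n := div_pos hs hsn
  have hyπ : s / Real.sqrt n ≤ Real.pi := by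
    rw [div_le_iff₀ hsn]; linarith
  apply pow_nonneg
  exact div_nonneg (Real.sin_nonneg_of_nonneg_of_le_pi hy0.le hyπ) hy0.le

lemma G_mono {n : ℕ} (hn : 1 ≤ n) {s : ℝ} (hs : 0 < s)
    (hsπ : s ≤ Real.pi * Real.sqrt n) : G n s ≤ G (n + 1) s := by
  have hπ := Real.pi_pos
  have hsn := sqrt_n_pos hn
  have hsn1 : Real.sqrt n < Real.sqrt (n + 1) := by
    apply Real.sqrt_lt_sqrt (Nat.cast_nonneg n)
    push_cast; linarith
  rcases eq_or_lt_of_le hsπ with he | hlt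
  · -- s = π √n : G n s = 0
    have : G n s = 0 := by
      rw [G]
      have : s / Real.sqrt n = Real.pi := by rw [he]; field_simp
      rw [this, Real.sin_pi, zero_div, zero_pow (by omega)]
    rw [this]
    apply G_nonneg (by omega) hs
    push_cast
    nlinarith [hsn1, hπ, hsn]
  · have hsπ1 : s < Real.pi * Real.sqrt (n + 1) := by push_cast; nlinarith
    rw [G_eq_exp hn hs hlt, G_eq_exp (by omega) hs (by push_cast at hsπ1 ⊢; exact hsπ1)]
    apply Real.exp_le_exp.mpr
    push_cast
    have hx0 : 0 < s / Real.sqrt (n + 1) := div_pos hs (lt_trans hsn hsn1)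
    have hxy : s / Real.sqrt (n + 1) < s / Real.sqrt n := by
      apply div_lt_div_of_pos_left hs hsn
      exact_mod_cast hsn1
    have hyπ : s / Real.sqrt n < Real.pi := by rw [div_lt_iff₀ hsn]; linarith
    have hF := F_gain hx0 hxy hyπ
    have hgain : 0 ≤ ((s / Real.sqrt n) ^ 2 - (s / Real.sqrt (n + 1)) ^ 2)
        / (2 * Real.pi ^ 4) := by
      apply div_nonneg _ (by positivity)
      nlinarith [hxy, hx0]
    have : Ffun (s / Real.sqrt (n + 1)) ≤ Ffun (s / Real.sqrt n) := by
      push_cast at hF ⊢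
      linarith
    nlinarith [sq_nonneg s, this]

set_option maxHeartbeats 1000000 in
lemma G_quant {n : ℕ} (hn : 3 ≤ n) {s : ℝ} (hs1 : 1 ≤ s) (hs2 : s ≤ 3 / 2) :
    G n s + 7 / (32 * Real.pi ^ 4 * (n * (n + 1))) ≤ G (n + 1) s := by
  have hπ := Real.pi_pos
  have hs : 0 < s := by linarith
  have hn1 : (1:ℕ) ≤ n := by omega
  have hsn := sqrt_n_pos hn1
  have hsn1 : Real.sqrt n < Real.sqrt (n + 1) := by
    apply Real.sqrt_lt_sqrt (Nat.cast_nonneg n)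
    push_cast; linarith
  have hn3 : (3:ℝ) ≤ (n:ℝ) := by exact_mod_cast hn
  have hsqrt3 : Real.sqrt 3 ≤ Real.sqrt n := Real.sqrt_le_sqrt (by exact_mod_cast hn)
  have h3 : (3:ℝ)/2 < Real.sqrt 3 := by
    rw [show (3:ℝ)/2 = Real.sqrt ((3/2)^2) by rw [Real.sqrt_sq (by norm_num)]]
    apply Real.sqrt_lt_sqrt (by positivity)
    norm_num
  set y := s / Real.sqrt n with hy
  set x := s / Real.sqrt (n + 1) with hx
  have hy0 : 0 < y := div_pos hs hsn
  have hy1 : y ≤ 1 := by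
    rw [hy, div_le_one hsn]
    calc s ≤ 3/2 := hs2
    _ ≤ Real.sqrt n := le_trans h3.le hsqrt3
  have hyπ : y < Real.pi := lt_of_le_of_lt hy1 (by linarith [Real.pi_gt_three])
  have hsπ : s < Real.pi * Real.sqrt n := by
    rw [hy, div_lt_iff₀ hsn] at hyπ; linarith
  have hsπ1 : s < Real.pi * Real.sqrt (n + 1) := by nlinarith
  have hx0 : 0 < x := div_pos hs (lt_trans hsn hsn1)
  have hxy : x < y := by
    rw [hx, hy]
    apply div_lt_div_of_pos_left hs hsn hsn1
  -- lower bound for G n s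
  have hsin : 1 - y ^ 2 / 4 < Real.sin y / y := by
    have h' : 0 < Real.sin y - (y - y^3/4) := by
      linarith [Real.sin_gt_sub_cube hy0, pow_pos hy0 3]
    have hd := div_pos h' hy0
    have he : (Real.sin y - (y - y^3/4))/y = Real.sin y / y - (1 - y^2/4) := by
      field_simp
    rw [he] at hd
    linarith
  have hq : (0:ℝ) ≤ 1 - y ^ 2 / 4 := by nlinarith
  have hGlb : 7 / 16 ≤ G n s := by
    have h1 : (1 - y ^ 2 / 4) ^ n ≤ G n s := by
      rw [G, ← hy]
      exact pow_le_pow_left₀ hq hsin.le n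
    have h2 : 1 + (n:ℝ) * (-(y^2/4)) ≤ (1 - y ^ 2 / 4) ^ n := by
      have h2' := one_add_mul_le_pow (a := -(y^2/4)) (R := ℝ) (by nlinarith) n
      have e : ((1:ℝ) + (-(y^2/4))) = 1 - y^2/4 := by ring
      rw [e] at h2'
      exact h2'
    have hny : (n:ℝ) * y ^ 2 = s ^ 2 := by
      rw [hy, div_pow, Real.sq_sqrt (Nat.cast_nonneg n)]
      field_simp
    have : 1 - s^2/4 ≤ (1 - y^2/4)^n := by
      calc 1 - s^2/4 = 1 + (n:ℝ) * (-(y^2/4)) := by rw [← hny]; ring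
      _ ≤ _ := h2
    nlinarith
  -- gain
  have hF := F_gain hx0 hxy hyπ
  have hGn1 : G (n+1) s = Real.exp (-(s ^ 2) * Ffun x) := by
    rw [G_eq_exp (by omega) hs (by push_cast; exact hsπ1), hx]
    norm_num
  have hGn : G n s = Real.exp (-(s ^ 2) * Ffun y) := G_eq_exp hn1 hs hsπ
  have hyx2 : y ^ 2 - x ^ 2 = s ^ 2 / ((n:ℝ) * (n+1)) := by
    rw [hy, hx, div_pow, div_pow, Real.sq_sqrt (Nat.cast_nonneg n),
      Real.sq_sqrt (by positivity)]
    push_cast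
    field_simp
    ring
  set δ := s ^ 2 * ((y ^ 2 - x ^ 2) / (2 * Real.pi ^ 4)) with hδ
  have hδlb : 1 / (2 * Real.pi ^ 4 * ((n:ℝ) * (n+1))) ≤ δ := by
    have hs2' : (1:ℝ) ≤ s ^ 2 := by nlinarith
    have hs4 : (1:ℝ) ≤ s ^ 2 * s ^ 2 := by nlinarith
    have hde : δ = s ^ 2 * s ^ 2 / (2 * Real.pi ^ 4 * ((n:ℝ) * (n+1))) := by
      rw [hδ, hyx2]
      have hn0 : ((n:ℝ) * ((n:ℝ)+1)) ≠ 0 := by positivity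
      field_simp
    rw [hde]
    gcongr
  have hexp : G n s * (1 + δ) ≤ G (n + 1) s := by
    rw [hGn, hGn1]
    have : -(s ^ 2) * Ffun y + δ ≤ -(s ^ 2) * Ffun x := by
      rw [hδ]
      nlinarith [mul_le_mul_of_nonneg_left hF (sq_nonneg s)]
    calc Real.exp (-(s ^ 2) * Ffun y) * (1 + δ)
        ≤ Real.exp (-(s ^ 2) * Ffun y) * Real.exp δ := by
          apply mul_le_mul_of_nonneg_left _ (Real.exp_nonneg _)
          linarith [Real.add_one_le_exp δ]
    _ = Real.exp (-(s ^ 2) * Ffun y + δ) := (Real.exp_add _ _).symm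
    _ ≤ _ := Real.exp_le_exp.mpr this
  have hδ0 : 0 ≤ δ := le_trans (by positivity) hδlb
  have : G n s + (7/16) * (1 / (2 * Real.pi ^ 4 * ((n:ℝ) * (n+1)))) ≤ G (n+1) s := by
    have h5 : G n s + (7/16) * δ ≤ G n s * (1 + δ) := by nlinarith [hGlb, hδ0]
    have h6 : (7/16) * (1 / (2 * Real.pi ^ 4 * ((n:ℝ) * (n+1)))) ≤ (7/16) * δ := by
      nlinarith [hδlb]
    linarith
  have heq : (7:ℝ)/16 * (1 / (2 * Real.pi ^ 4 * ((n:ℝ) * (n+1))))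
      = 7 / (32 * Real.pi ^ 4 * ((n:ℝ) * (n+1))) := by
    have hπ4 : Real.pi ^ 4 ≠ 0 := by positivity
    have hnn : ((n:ℝ) * ((n:ℝ)+1)) ≠ 0 := by positivity
    field_simp
    ring
  rw [heq] at this
  push_cast at this ⊢
  linarith


lemma G_meas (n : ℕ) : Measurable (G n) := by
  unfold G
  fun_prop

lemma G_int_Ioc {n : ℕ} (hn : 1 ≤ n) (b : ℝ) : IntegrableOn (G n) (Set.Ioc 0 b) := by
  apply Measure.integrableOn_of_bounded (M := 1)
  · rw [Real.volume_Ioc]; exact ENNReal.ofReal_ne_top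
  · exact (G_meas n).aestronglyMeasurable
  · filter_upwards [ae_restrict_mem measurableSet_Ioc] with s hs
    rw [Real.norm_eq_abs]
    exact G_abs_le_one hn hs.1

lemma G_bound_tail {n : ℕ} (hn : 1 ≤ n) {s : ℝ} (hs : 0 < s) :
    |G n s| ≤ (Real.sqrt n) ^ n * s ^ (-(n:ℝ)) := by
  have hsn := sqrt_n_pos hn
  have hy : 0 < s / Real.sqrt n := div_pos hs hsn
  have h1 : |Real.sin (s / Real.sqrt n) / (s / Real.sqrt n)| ≤ Real.sqrt n / s := by
    rw [abs_div, abs_of_pos hy]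
    calc |Real.sin (s / Real.sqrt n)| / (s / Real.sqrt n)
        ≤ 1 / (s / Real.sqrt n) := by gcongr; exact Real.abs_sin_le_one _
      _ = Real.sqrt n / s := one_div_div _ _
  have h2 : |G n s| ≤ (Real.sqrt n / s) ^ n := by
    rw [G, abs_pow]
    exact pow_le_pow_left₀ (abs_nonneg _) h1 n
  have h3 : (Real.sqrt n / s) ^ n = (Real.sqrt n) ^ n * s ^ (-(n:ℝ)) := by
    rw [div_pow, Real.rpow_neg hs.le, Real.rpow_natCast, div_eq_mul_inv]
  rw [← h3]; exact h2

lemma G_int_tail {n : ℕ} (hn : 2 ≤ n) {c : ℝ} (hc : 0 < c) :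
    IntegrableOn (G n) (Set.Ioi c) := by
  have hr : -(n:ℝ) < -1 := by
    have : (2:ℝ) ≤ (n:ℝ) := by exact_mod_cast hn
    linarith
  apply Integrable.mono' (g := fun s => (Real.sqrt n) ^ n * s ^ (-(n:ℝ)))
  · exact (integrableOn_Ioi_rpow_of_lt hr hc).const_mul _
  · exact (G_meas n).aestronglyMeasurable.restrict
  · filter_upwards [ae_restrict_mem measurableSet_Ioi] with s hs
    rw [Real.norm_eq_abs]
    exact G_bound_tail (by omega) (lt_trans hc hs)

lemma G_int_Ioi {n : ℕ} (hn : 2 ≤ n) : IntegrableOn (G n) (Set.Ioi 0) := by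
  have : Set.Ioi (0:ℝ) = Set.Ioc 0 1 ∪ Set.Ioi 1 := (Set.Ioc_union_Ioi_eq_Ioi one_pos.le).symm
  rw [this]
  exact (G_int_Ioc (by omega) 1).union (G_int_tail hn one_pos)

lemma tail_int_val {n : ℕ} (hn : 2 ≤ n) {c : ℝ} (hc : 0 < c) :
    ∫ s in Set.Ioi c, s ^ (-(n:ℝ)) = c ^ (1-(n:ℝ)) / ((n:ℝ) - 1) := by
  have hr : -(n:ℝ) < -1 := by
    have : (2:ℝ) ≤ (n:ℝ) := by exact_mod_cast hn
    linarith
  rw [integral_Ioi_rpow_of_lt hr hc]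
  have h1 : -(n:ℝ) + 1 = 1 - (n:ℝ) := by ring
  rw [h1]
  have hn2 : (2:ℝ) ≤ (n:ℝ) := by exact_mod_cast hn
  have h2 : (1:ℝ) - n ≠ 0 := by linarith
  have h3 : (n:ℝ) - 1 ≠ 0 := by linarith
  field_simp
  ring

lemma G_tail_bound {n : ℕ} (hn : 3 ≤ n) :
    |∫ s in Set.Ioi (Real.pi * Real.sqrt n), G n s| ≤ Real.pi ^ (1 - (n:ℝ)) := by
  have hπ := Real.pi_pos
  have hn1 : (1:ℕ) ≤ n := by omega
  have hsn := sqrt_n_pos hn1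
  have hc : 0 < Real.pi * Real.sqrt n := by positivity
  have hnR : (3:ℝ) ≤ (n:ℝ) := by exact_mod_cast hn
  have key : |∫ s in Set.Ioi (Real.pi * Real.sqrt n), G n s|
      ≤ ∫ s in Set.Ioi (Real.pi * Real.sqrt n), (Real.sqrt n) ^ n * s ^ (-(n:ℝ)) := by
    rw [← Real.norm_eq_abs]
    apply norm_integral_le_of_norm_le
    · apply Integrable.const_mul
      apply integrableOn_Ioi_rpow_of_lt (by linarith) hc
    · filter_upwards [ae_restrict_mem measurableSet_Ioi] with s hs
      rw [Real.norm_eq_abs]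
      exact G_bound_tail hn1 (lt_trans hc hs)
  have hval : ∫ s in Set.Ioi (Real.pi * Real.sqrt n), (Real.sqrt n) ^ n * s ^ (-(n:ℝ))
      = (Real.sqrt n) ^ n * ((Real.pi * Real.sqrt n) ^ (1-(n:ℝ)) / ((n:ℝ) - 1)) := by
    rw [MeasureTheory.integral_const_mul, tail_int_val (by omega) hc]
  rw [hval] at key
  -- now bound the RHS by π^(1-n)
  have hn1R : (0:ℝ) < (n:ℝ) - 1 := by linarith
  have e : (Real.sqrt n) ^ n * ((Real.pi * Real.sqrt n) ^ (1-(n:ℝ)) / ((n:ℝ) - 1))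
      = Real.pi ^ (1-(n:ℝ)) * (Real.sqrt n / ((n:ℝ)-1)) := by
    rw [Real.mul_rpow hπ.le hsn.le, ← Real.rpow_natCast (Real.sqrt n) n]
    rw [div_eq_mul_inv, div_eq_mul_inv]
    rw [show (Real.sqrt ↑n) ^ ((n:ℕ):ℝ) * (Real.pi ^ (1-(n:ℝ)) * Real.sqrt ↑n ^ (1-(n:ℝ))
        * ((n:ℝ)-1)⁻¹) = Real.pi ^ (1-(n:ℝ)) * (((Real.sqrt ↑n) ^ ((n:ℕ):ℝ)
        * Real.sqrt ↑n ^ (1-(n:ℝ))) * ((n:ℝ)-1)⁻¹) from by ring]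
    rw [← Real.rpow_add hsn]
    norm_num
  rw [e] at key
  have hsle : Real.sqrt n ≤ (n:ℝ) - 1 := by
    rw [show ((n:ℝ)-1) = Real.sqrt (((n:ℝ)-1)^2) from (Real.sqrt_sq (by linarith)).symm]
    exact Real.sqrt_le_sqrt (by nlinarith)
  have hfrac : Real.sqrt n / ((n:ℝ)-1) ≤ 1 := (div_le_one hn1R).mpr hsle
  calc |∫ s in Set.Ioi (Real.pi * Real.sqrt n), G n s|
      ≤ Real.pi ^ (1-(n:ℝ)) * (Real.sqrt n / ((n:ℝ)-1)) := key
    _ ≤ Real.pi ^ (1-(n:ℝ)) * 1 := by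
        apply mul_le_mul_of_nonneg_left hfrac (Real.rpow_nonneg hπ.le _)
    _ = Real.pi ^ (1-(n:ℝ)) := mul_one _



lemma cv {n : ℕ} (hn : 1 ≤ n) :
    ∫ s in Set.Ioi (0:ℝ), G n s
      = Real.sqrt n * ∫ t in Set.Ioi (0:ℝ), (Real.sin t / t) ^ n := by
  have hsn := sqrt_n_pos hn
  have hb : 0 < (Real.sqrt (n:ℝ))⁻¹ := inv_pos.mpr hsn
  have h := MeasureTheory.integral_comp_mul_left_Ioi
    (fun t => (Real.sin t / t) ^ n) 0 hb
  simp only [mul_zero, inv_inv, smul_eq_mul] at h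
  rw [← h]
  apply MeasureTheory.setIntegral_congr_fun measurableSet_Ioi
  intro s _
  simp only [G, inv_mul_eq_div]

lemma pi4_le : Real.pi ^ 4 ≤ 100 := by
  have h1 : Real.pi ^ 2 ≤ 9.9225 := by nlinarith [Real.pi_gt_three, Real.pi_lt_d2]
  nlinarith [h1, Real.pi_pos, sq_nonneg Real.pi]

lemma nat_arith {n : ℕ} (hn : 30 ≤ n) : (25600:ℝ) * n * (n+1) < 7 * 3 ^ (n-1) := by
  induction n, hn using Nat.le_induction with
  | base => norm_num
  | succ m hm ih =>
    have h1 : (30:ℝ) ≤ (m:ℝ) := by exact_mod_cast hm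
    have he : m + 1 - 1 = m - 1 + 1 := by omega
    rw [he, pow_succ]
    push_cast
    nlinarith [ih]

lemma arith {n : ℕ} (hn : 30 ≤ n) :
    2 * Real.pi ^ (1 - (n:ℝ)) + 2 * Real.pi ^ (1 - (n:ℝ))
      < 7 / (32 * Real.pi ^ 4 * ((n:ℝ) * ((n:ℝ) + 1))) * (1/2) := by
  have hπ := Real.pi_pos
  have hπ3 := Real.pi_gt_three
  have hnR : (30:ℝ) ≤ (n:ℝ) := by exact_mod_cast hn
  -- rewrite rpow as inverse of nat pow
  have he : Real.pi ^ (1 - (n:ℝ)) = (Real.pi ^ (n-1 : ℕ))⁻¹ := by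
    rw [← Real.rpow_natCast Real.pi (n-1), ← Real.rpow_neg hπ.le]
    congr 1
    have : ((n - 1 : ℕ) : ℝ) = (n:ℝ) - 1 := by
      have : (1:ℕ) ≤ n := by omega
      push_cast [this]
      ring
    rw [this]
    ring
  rw [he]
  have hp3 : (3:ℝ) ^ (n-1:ℕ) ≤ Real.pi ^ (n-1:ℕ) :=
    pow_le_pow_left₀ (by norm_num) hπ3.le _
  have hkey := nat_arith hn
  have hpow_pos : (0:ℝ) < Real.pi ^ (n-1:ℕ) := by positivity
  have hd_pos : (0:ℝ) < 32 * Real.pi ^ 4 * ((n:ℝ) * ((n:ℝ) + 1)) := by positivity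
  rw [div_mul_eq_mul_div, show (7:ℝ) * (1/2) = 7/2 by norm_num]
  rw [show (2:ℝ) * (Real.pi ^ (n-1:ℕ))⁻¹ + 2 * (Real.pi ^ (n-1:ℕ))⁻¹
    = 4 / Real.pi ^ (n-1:ℕ) by field_simp; ring]
  rw [div_lt_div_iff₀ hpow_pos hd_pos]
  -- 4 * (32 π⁴ n (n+1)) < 7/2 * π^(n-1)
  have h1 : (4:ℝ) * (32 * Real.pi ^ 4 * ((n:ℝ) * ((n:ℝ) + 1)))
      ≤ 12800 * (n:ℝ) * ((n:ℝ)+1) := by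
    have hnn : (0:ℝ) ≤ (n:ℝ) * ((n:ℝ)+1) := by positivity
    nlinarith [mul_le_mul_of_nonneg_right pi4_le hnn]
  have h2 : (12800:ℝ) * n * (n+1) < 7/2 * 3 ^ (n-1:ℕ) := by linarith [hkey]
  have h3 : (7:ℝ)/2 * 3 ^ (n-1:ℕ) ≤ 7/2 * Real.pi ^ (n-1:ℕ) := by linarith [hp3]
  linarith

lemma split_Ioc {f : ℝ → ℝ} {p q r : ℝ} (hpq : p ≤ q) (hqr : q ≤ r)
    (h1 : IntegrableOn f (Set.Ioc p q)) (h2 : IntegrableOn f (Set.Ioc q r)) :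
    ∫ x in Set.Ioc p r, f x = (∫ x in Set.Ioc p q, f x) + ∫ x in Set.Ioc q r, f x := by
  rw [← Set.Ioc_union_Ioc_eq_Ioc hpq hqr,
    MeasureTheory.setIntegral_union (Set.Ioc_disjoint_Ioc_of_le le_rfl) measurableSet_Ioc h1 h2]

/-- There exists an integer `n₀` such that `I (n) < I (n+1)` for all `n ≥ n₀`. -/
theorem I_eventually_strict_mono : ∃ n₀ : ℕ, ∀ n : ℕ, n₀ ≤ n → I n < I (n + 1) := by
  use 30
  intro n hn
  have hπ := Real.pi_pos
  have hπ3 := Real.pi_gt_three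
  have hn1 : (1:ℕ) ≤ n := by omega
  have hn2 : (2:ℕ) ≤ n := by omega
  have hn3 : (3:ℕ) ≤ n := by omega
  have hsn := sqrt_n_pos hn1
  have hsn' := sqrt_n_pos (n := n + 1) (by omega)
  have h1sq : (1:ℝ) ≤ Real.sqrt n := by
    rw [show (1:ℝ) = Real.sqrt 1 from Real.sqrt_one.symm]
    apply Real.sqrt_le_sqrt
    exact_mod_cast hn1
  set a := Real.pi * Real.sqrt n with ha
  set b := Real.pi * Real.sqrt ((n+1 : ℕ) : ℝ) with hb
  have h0a : 0 < a := by positivity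
  have h32a : (3:ℝ)/2 < a := by rw [ha]; nlinarith
  have h1a : (1:ℝ) ≤ a := by linarith
  have hab : a ≤ b := by
    rw [ha, hb]
    have : Real.sqrt n ≤ Real.sqrt ((n+1:ℕ):ℝ) := by
      apply Real.sqrt_le_sqrt
      push_cast; linarith
    nlinarith
  set γ : ℝ := 7 / (32 * Real.pi ^ 4 * ((n:ℝ) * ((n:ℝ) + 1))) with hγ
  -- integrability
  have i_n_Ioc : ∀ q : ℝ, IntegrableOn (G n) (Set.Ioc 0 q) := fun q => G_int_Ioc hn1 q
  have i_n1_Ioc : ∀ q : ℝ, IntegrableOn (G (n+1)) (Set.Ioc 0 q) := fun q => G_int_Ioc (by omega) q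
  have i_n_12 : IntegrableOn (G n) (Set.Ioc 1 (3/2)) :=
    (i_n_Ioc (3/2)).mono_set (Set.Ioc_subset_Ioc_left (by norm_num))
  have i_n1_12 : IntegrableOn (G (n+1)) (Set.Ioc 1 (3/2)) :=
    (i_n1_Ioc (3/2)).mono_set (Set.Ioc_subset_Ioc_left (by norm_num))
  have i_n_32a : IntegrableOn (G n) (Set.Ioc (3/2) a) :=
    (i_n_Ioc a).mono_set (Set.Ioc_subset_Ioc_left (by norm_num))
  have i_n1_32a : IntegrableOn (G (n+1)) (Set.Ioc (3/2) a) :=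
    (i_n1_Ioc a).mono_set (Set.Ioc_subset_Ioc_left (by norm_num))
  have i_n1_ab : IntegrableOn (G (n+1)) (Set.Ioc a b) :=
    (i_n1_Ioc b).mono_set (Set.Ioc_subset_Ioc_left h0a.le)
  -- splits
  have sA : ∫ s in Set.Ioc 0 a, G n s
      = (∫ s in Set.Ioc 0 1, G n s) + (∫ s in Set.Ioc 1 (3/2), G n s)
        + ∫ s in Set.Ioc (3/2) a, G n s := by
    rw [split_Ioc (by norm_num) h32a.le ((i_n_Ioc (3/2)).mono_set
      (Set.Ioc_subset_Ioc_right (by norm_num))) i_n_32a,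
      split_Ioc (by norm_num) (by norm_num) (i_n_Ioc 1) i_n_12]
  have sA' : ∫ s in Set.Ioc 0 a, G (n+1) s
      = (∫ s in Set.Ioc 0 1, G (n+1) s) + (∫ s in Set.Ioc 1 (3/2), G (n+1) s)
        + ∫ s in Set.Ioc (3/2) a, G (n+1) s := by
    rw [split_Ioc (by norm_num) h32a.le ((i_n1_Ioc (3/2)).mono_set
      (Set.Ioc_subset_Ioc_right (by norm_num))) i_n1_32a,
      split_Ioc (by norm_num) (by norm_num) (i_n1_Ioc 1) i_n1_12]
  have sTot : ∫ s in Set.Ioi (0:ℝ), G n s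
      = (∫ s in Set.Ioc 0 a, G n s) + ∫ s in Set.Ioi a, G n s := by
    rw [← Set.Ioc_union_Ioi_eq_Ioi h0a.le,
      MeasureTheory.setIntegral_union Set.Ioc_disjoint_Ioi_same measurableSet_Ioi
        (i_n_Ioc a) (G_int_tail hn2 h0a)]
  have sTot' : ∫ s in Set.Ioi (0:ℝ), G (n+1) s
      = (∫ s in Set.Ioc 0 a, G (n+1) s) + (∫ s in Set.Ioc a b, G (n+1) s)
        + ∫ s in Set.Ioi b, G (n+1) s := by
    rw [← Set.Ioc_union_Ioi_eq_Ioi (le_trans h0a.le hab),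
      MeasureTheory.setIntegral_union Set.Ioc_disjoint_Ioi_same measurableSet_Ioi
        (i_n1_Ioc b) (G_int_tail (by omega) (lt_of_lt_of_le h0a hab)),
      split_Ioc h0a.le hab (i_n1_Ioc a) i_n1_ab]
  -- piece inequalities
  have hP1 : ∫ s in Set.Ioc 0 1, G n s ≤ ∫ s in Set.Ioc 0 1, G (n+1) s := by
    apply MeasureTheory.setIntegral_mono_on (i_n_Ioc 1) (i_n1_Ioc 1) measurableSet_Ioc
    intro s hs
    exact G_mono hn1 hs.1 (le_trans hs.2 h1a)
  have hP3 : ∫ s in Set.Ioc (3/2) a, G n s ≤ ∫ s in Set.Ioc (3/2) a, G (n+1) s := by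
    apply MeasureTheory.setIntegral_mono_on i_n_32a i_n1_32a measurableSet_Ioc
    intro s hs
    exact G_mono hn1 (lt_trans (by norm_num) hs.1) hs.2
  have hP2 : (∫ s in Set.Ioc 1 (3/2), G n s) + γ * (1/2)
      ≤ ∫ s in Set.Ioc 1 (3/2), G (n+1) s := by
    have hconst : IntegrableOn (fun _ : ℝ => γ) (Set.Ioc 1 (3/2)) := by
      exact integrableOn_const (by rw [Real.volume_Ioc]; exact ENNReal.ofReal_ne_top)
    have hmono : ∫ s in Set.Ioc 1 (3/2), (G n s + γ)
        ≤ ∫ s in Set.Ioc 1 (3/2), G (n+1) s := by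
      apply MeasureTheory.setIntegral_mono_on (i_n_12.add hconst) i_n1_12 measurableSet_Ioc
      intro s hs
      have := G_quant hn3 hs.1.le hs.2
      simp only [Pi.add_apply]
      rw [hγ]
      push_cast at this ⊢
      linarith
    rw [MeasureTheory.integral_add i_n_12 hconst, MeasureTheory.setIntegral_const] at hmono
    have hvol : (volume (Set.Ioc (1:ℝ) (3/2))).toReal = 1/2 := by
      rw [Real.volume_Ioc, ENNReal.toReal_ofReal (by norm_num)]
      norm_num
    rw [measureReal_def, hvol] at hmono
    rw [smul_eq_mul] at hmono
    linarith
  -- middle nonneg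
  have hM : 0 ≤ ∫ s in Set.Ioc a b, G (n+1) s := by
    apply MeasureTheory.setIntegral_nonneg measurableSet_Ioc
    intro s hs
    exact G_nonneg (by omega) (lt_trans h0a hs.1) hs.2
  -- tails
  have hT := G_tail_bound hn3
  have hT' := G_tail_bound (n := n + 1) (by omega)
  have hTle : Real.pi ^ (1 - ((n+1:ℕ):ℝ)) ≤ Real.pi ^ (1 - (n:ℝ)) := by
    apply Real.rpow_le_rpow_of_exponent_le (by linarith)
    push_cast; linarith
  -- put together
  have harith := arith hn
  have habs1 : ∫ s in Set.Ioi a, G n s ≤ Real.pi ^ (1 - (n:ℝ)) :=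
    le_trans (le_abs_self _) hT
  have habs2 : -(Real.pi ^ (1 - (n:ℝ))) ≤ ∫ s in Set.Ioi b, G (n+1) s := by
    have := neg_abs_le (∫ s in Set.Ioi b, G (n+1) s)
    have h2 : |∫ s in Set.Ioi b, G (n+1) s| ≤ Real.pi ^ (1 - (n:ℝ)) := le_trans hT' hTle
    linarith
  have hrp : 0 < Real.pi ^ (1 - (n:ℝ)) := Real.rpow_pos_of_pos hπ _
  rw [← hγ] at harith
  clear_value γ a b
  have hmain : ∫ s in Set.Ioi (0:ℝ), G n s < ∫ s in Set.Ioi (0:ℝ), G (n+1) s := by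
    rw [sTot, sTot', sA, sA']
    linarith
  -- conclude for I
  have hIn : I n = 2 / Real.pi * ∫ s in Set.Ioi (0:ℝ), G n s := by
    rw [I, cv hn1]; ring
  have hIn1 : I (n+1) = 2 / Real.pi * ∫ s in Set.Ioi (0:ℝ), G (n+1) s := by
    rw [I, cv (n := n+1) (by omega)]; ring
  rw [hIn, hIn1]
  apply mul_lt_mul_of_pos_left hmain
  positivity
end

section
/- I(n) = (2√n/π) ∫₀^∞ ((sin t)/t)^n dt tends to √(6/π) as n → ∞; consequently the upper bound √(6/π) for I(n) is best possible. -/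
open MeasureTheory Real Filter

section Aux
open Set

private lemma mono_from_deriv {f f' : ℝ → ℝ} (hf : ∀ x, HasDerivAt f (f' x) x)
    (h' : ∀ x, 0 ≤ x → 0 ≤ f' x) {x : ℝ} (hx : 0 ≤ x) : f 0 ≤ f x := by
  have hm : MonotoneOn f (Set.Ici 0) := by
    apply monotoneOn_of_deriv_nonneg (convex_Ici 0)
      (fun y _ => (hf y).continuousAt.continuousWithinAt)
    · intro y hy
      exact ((hf y).differentiableAt.differentiableWithinAt)
    · intro y hy
      rw [interior_Ici] at hy
      rw [(hf y).deriv]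
      exact h' y hy.le
  exact hm (self_mem_Ici) hx hx

private lemma sin_ge_aux {x : ℝ} (hx : 0 ≤ x) : x - x ^ 3 / 6 ≤ Real.sin x := by
  have := mono_from_deriv (f := fun x => Real.sin x - (x - x ^ 3 / 6))
    (f' := fun x => Real.cos x - (1 - x ^ 2 / 2)) (fun y => by
      have h1 := (Real.hasDerivAt_sin y)
      have h2 : HasDerivAt (fun x : ℝ => x - x ^ 3 / 6) (1 - y ^ 2 / 2) y := by
        have := ((hasDerivAt_id y).sub (((hasDerivAt_pow 3 y)).div_const 6))
        exact this.congr_deriv (by norm_num <;> ring)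
      exact h1.sub h2)
    (fun y _ => by nlinarith [Real.one_sub_sq_div_two_le_cos (x := y)]) hx
  simp at this
  linarith

private lemma cos_le_aux {x : ℝ} (hx : 0 ≤ x) : Real.cos x ≤ 1 - x ^ 2 / 2 + x ^ 4 / 24 := by
  have := mono_from_deriv (f := fun x => (1 - x ^ 2 / 2 + x ^ 4 / 24) - Real.cos x)
    (f' := fun x => Real.sin x - (x - x ^ 3 / 6)) (fun y => by
      have h2 : HasDerivAt (fun x : ℝ => 1 - x ^ 2 / 2 + x ^ 4 / 24) (-(y) + y ^ 3 / 6) y := by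
        have := (((hasDerivAt_pow 2 y).div_const 2).const_sub 1).add ((hasDerivAt_pow 4 y).div_const 24)
        exact this.congr_deriv (by norm_num <;> ring)
      have := h2.sub (Real.hasDerivAt_cos y)
      exact this.congr_deriv (by ring))
    (fun y hy => by have := sin_ge_aux hy; linarith) hx
  simp at this
  linarith

private lemma sin_le_aux {x : ℝ} (hx : 0 ≤ x) : Real.sin x ≤ x - x ^ 3 / 6 + x ^ 5 / 120 := by
  have := mono_from_deriv (f := fun x => (x - x ^ 3 / 6 + x ^ 5 / 120) - Real.sin x)
    (f' := fun x => (1 - x ^ 2 / 2 + x ^ 4 / 24) - Real.cos x) (fun y => by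
      have h2 : HasDerivAt (fun x : ℝ => x - x ^ 3 / 6 + x ^ 5 / 120)
          (1 - y ^ 2 / 2 + y ^ 4 / 24) y := by
        have := ((hasDerivAt_id y).sub ((hasDerivAt_pow 3 y).div_const 6)).add
          ((hasDerivAt_pow 5 y).div_const 120)
        exact this.congr_deriv (by norm_num <;> ring)
      exact h2.sub (Real.hasDerivAt_sin y))
    (fun y hy => by have := cos_le_aux hy; linarith) hx
  simp at this
  linarith

private lemma exp_neg_ge_aux {x : ℝ} (hx : 0 ≤ x) :
    1 - x + x ^ 2 / 2 - x ^ 3 / 6 ≤ Real.exp (-x) := by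
  have key := mono_from_deriv (f := fun x => 1 - Real.exp x * (1 - x + x ^ 2 / 2 - x ^ 3 / 6))
    (f' := fun x => Real.exp x * (x ^ 3 / 6)) (fun y => by
      have h2 : HasDerivAt (fun x : ℝ => 1 - x + x ^ 2 / 2 - x ^ 3 / 6)
          (-1 + y * 1 - y ^ 2 / 2) y := by
        have := (((hasDerivAt_id y).const_sub 1).add ((hasDerivAt_pow 2 y).div_const 2)).sub
          ((hasDerivAt_pow 3 y).div_const 6)
        exact this.congr_deriv (by norm_num <;> ring)
      have := ((Real.hasDerivAt_exp y).mul h2).const_sub 1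
      exact this.congr_deriv (by ring))
    (fun y hy => by positivity) hx
  simp at key
  have hex : 0 < Real.exp x := Real.exp_pos x
  rw [Real.exp_neg, ← one_div, le_div_iff₀ hex]
  nlinarith [key]

private lemma sinc_le_exp {u : ℝ} (h0 : 0 < u) (h2 : u ≤ 2) :
    Real.sin u / u ≤ Real.exp (-(u ^ 2) / 6) := by
  have h1 : Real.sin u / u ≤ 1 - u ^ 2 / 6 + u ^ 4 / 120 := by
    rw [div_le_iff₀ h0]
    have := sin_le_aux h0.le
    nlinarith
  have h3 : 1 - u ^ 2 / 6 + (u ^ 2 / 6) ^ 2 / 2 - (u ^ 2 / 6) ^ 3 / 6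
      ≤ Real.exp (-(u ^ 2) / 6) := by
    have := exp_neg_ge_aux (x := u ^ 2 / 6) (by positivity)
    rw [show -(u ^ 2) / 6 = -(u ^ 2 / 6) by ring]
    linarith
  have h6 : u ^ 6 ≤ 4 * u ^ 4 := by
    nlinarith [mul_nonneg (show (0:ℝ) ≤ 4 - u ^ 2 by nlinarith) (show (0:ℝ) ≤ u ^ 4 by positivity)]
  have h4 : (0:ℝ) ≤ u ^ 4 := by positivity
  nlinarith

private lemma r_lim : Tendsto (fun u : ℝ => (Real.sin u / u - 1) / u ^ 2) (nhdsWithin 0 (Set.Ioi 0))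
    (nhds (-(1/6))) := by
  have key : Tendsto (fun u : ℝ => ((Real.sin u / u - 1) / u ^ 2 + 1/6)) (nhdsWithin 0 (Set.Ioi 0))
      (nhds 0) := by
    apply squeeze_zero_norm' (a := fun u => 5 * u / 96)
    · filter_upwards [Ioo_mem_nhdsGT_of_mem (Set.mem_Ico.mpr ⟨le_refl (0:ℝ), zero_lt_one⟩)]
        with u hu
      obtain ⟨hu0, hu1⟩ := hu
      have hb := Real.sin_bound (x := u) (by rw [abs_of_pos hu0]; exact hu1.le)
      rw [abs_of_pos hu0] at hb
      have heq : (Real.sin u / u - 1) / u ^ 2 + 1/6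
          = (Real.sin u - (u - u ^ 3 / 6)) / u ^ 3 := by
        field_simp
        ring
      rw [heq, Real.norm_eq_abs, abs_div, abs_of_pos (by positivity : (0:ℝ) < u ^ 3)]
      rw [div_le_iff₀ (by positivity : (0:ℝ) < u ^ 3)]
      calc |Real.sin u - (u - u ^ 3 / 6)| ≤ u ^ 4 * (5/96) :=
            hb.trans (by nlinarith [pow_pos hu0 4, mul_pos (pow_pos hu0 4) (sub_pos.mpr hu1)])
        _ ≤ 5 * u / 96 * u ^ 3 := by ring_nf; rfl
    · have : Tendsto (fun u : ℝ => 5 * u / 96) (nhds 0) (nhds (5 * 0 / 96)) := by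
        exact Continuous.tendsto (by continuity) 0
      simpa using this.mono_left nhdsWithin_le_nhds
  have := key.add_const (-(1/6))
  simpa using this

private lemma sinc_tendsto_one : Tendsto (fun u : ℝ => Real.sin u / u)
    (nhdsWithin 0 (Set.Ioi 0)) (nhds 1) := by
  have h2 : Tendsto (fun u : ℝ => u ^ 2) (nhdsWithin 0 (Set.Ioi 0)) (nhds 0) := by
    have : Tendsto (fun u : ℝ => u ^ 2) (nhds 0) (nhds 0) := by
      simpa using (continuous_pow 2).tendsto (0:ℝ)
    exact this.mono_left nhdsWithin_le_nhds
  have hmul := r_lim.mul h2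
  have : Tendsto (fun u : ℝ => (Real.sin u / u - 1) / u ^ 2 * u ^ 2 + 1)
      (nhdsWithin 0 (Set.Ioi 0)) (nhds 1) := by
    simpa using hmul.add_const 1
  apply this.congr'
  filter_upwards [self_mem_nhdsWithin] with u hu
  have hu0 : u ≠ 0 := ne_of_gt hu
  field_simp
  ring

private lemma log_lim : Tendsto (fun u : ℝ => Real.log (Real.sin u / u) / u ^ 2)
    (nhdsWithin 0 (Set.Ioi 0)) (nhds (-(1/6))) := by
  have hslope : Tendsto (slope Real.log 1) (nhdsWithin 1 {(1:ℝ)}ᶜ) (nhds 1) := by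
    have := hasDerivAt_iff_tendsto_slope.mp (Real.hasDerivAt_log one_ne_zero)
    simpa using this
  have hcomp : Tendsto (fun u : ℝ => Real.sin u / u) (nhdsWithin 0 (Set.Ioi 0))
      (nhdsWithin 1 {(1:ℝ)}ᶜ) := by
    rw [tendsto_nhdsWithin_iff]
    refine ⟨sinc_tendsto_one, ?_⟩
    filter_upwards [Ioo_mem_nhdsGT_of_mem (Set.mem_Ico.mpr ⟨le_refl (0:ℝ), zero_lt_one⟩)]
      with u hu
    have : Real.sin u < u := Real.sin_lt hu.1
    have hune : u ≠ 0 := ne_of_gt hu.1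
    simp only [Set.mem_compl_iff, Set.mem_singleton_iff]
    intro h
    rw [div_eq_one_iff_eq hune] at h
    exact absurd h (ne_of_lt this)
  have hprod := (hslope.comp hcomp).mul r_lim
  have : (1 : ℝ) * (-(1/6)) = -(1/6) := by ring
  rw [this] at hprod
  apply hprod.congr'
  filter_upwards [Ioo_mem_nhdsGT_of_mem (Set.mem_Ico.mpr ⟨le_refl (0:ℝ), zero_lt_one⟩)]
    with u hu
  have hu0 : 0 < u := hu.1
  have hlt : Real.sin u / u < 1 := by
    rw [div_lt_one hu0]; exact Real.sin_lt hu0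
  have hne : Real.sin u / u - 1 ≠ 0 := by
    intro h; apply absurd (by linarith : Real.sin u / u = 1) (ne_of_lt hlt)
  simp only [Function.comp_apply, slope_def_field, Real.log_one]
  set X := Real.sin u / u with hX
  have hu2 : (u:ℝ) ^ 2 ≠ 0 := by positivity
  field_simp
  ring

private lemma sqrt_nat_atTop : Tendsto (fun n : ℕ => Real.sqrt n) atTop atTop := by
  apply tendsto_atTop_atTop.mpr
  intro b
  refine ⟨Nat.ceil (b ^ 2), fun n hn => ?_⟩
  calc b ≤ |b| := le_abs_self b
    _ = Real.sqrt (b ^ 2) := (Real.sqrt_sq_eq_abs b).symm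
    _ ≤ Real.sqrt n := by
      apply Real.sqrt_le_sqrt
      calc b ^ 2 ≤ (Nat.ceil (b ^ 2) : ℝ) := Nat.le_ceil _
        _ ≤ (n : ℝ) := by exact_mod_cast hn

private lemma pointwise_lim {s : ℝ} (hs : 0 < s) :
    Tendsto (fun n : ℕ => Set.indicator (Set.Ioc 0 (2 * Real.sqrt n))
      (fun x : ℝ => (Real.sin (x / Real.sqrt n) / (x / Real.sqrt n)) ^ n) s) atTop
      (nhds (Real.exp (-s ^ 2 / 6))) := by
  have hsqn : ∀ᶠ n : ℕ in atTop, (0:ℝ) < Real.sqrt n := by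
    filter_upwards [eventually_ge_atTop 1] with n hn
    have : (0:ℝ) < (n:ℝ) := by exact_mod_cast hn
    positivity
  -- u n → 0 within Ioi 0
  have hu : Tendsto (fun n : ℕ => s / Real.sqrt n) atTop (nhdsWithin 0 (Set.Ioi 0)) := by
    rw [tendsto_nhdsWithin_iff]
    constructor
    · have := sqrt_nat_atTop.inv_tendsto_atTop
      have h2 := this.const_mul s
      simpa [div_eq_mul_inv] using h2
    · filter_upwards [hsqn] with n hn
      exact div_pos hs hn
  have hψ := log_lim.comp hu
  have hmul := hψ.const_mul (s ^ 2)
  have hval : s ^ 2 * -(1/6) = -s ^ 2 / 6 := by ring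
  rw [hval] at hmul
  -- n * log (sinc (u n)) → -s²/6
  have key : Tendsto (fun n : ℕ => (n : ℝ) *
      Real.log (Real.sin (s / Real.sqrt n) / (s / Real.sqrt n))) atTop (nhds (-s ^ 2 / 6)) := by
    apply hmul.congr'
    filter_upwards [hsqn, eventually_ge_atTop 1] with n hn h1
    have hn2 : ((n:ℝ)) ≠ 0 := by
      have : (1:ℝ) ≤ (n:ℝ) := by exact_mod_cast h1
      linarith
    have hsq : Real.sqrt n ^ 2 = (n : ℝ) := Real.sq_sqrt (Nat.cast_nonneg n)
    have husq : (s / Real.sqrt n) ^ 2 = s ^ 2 / n := by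
      rw [div_pow, hsq]
    simp only [Function.comp_apply, husq]
    field_simp
  have hexp := (Real.continuous_exp.tendsto _).comp key
  apply hexp.congr'
  filter_upwards [hsqn, sqrt_nat_atTop.eventually_ge_atTop (s / 2)] with n hn hs2
  have hmem : s ∈ Set.Ioc 0 (2 * Real.sqrt n) := ⟨hs, by linarith⟩
  rw [Set.indicator_of_mem hmem]
  have hu0 : 0 < s / Real.sqrt n := div_pos hs hn
  have hu2 : s / Real.sqrt n ≤ 2 := by
    rw [div_le_iff₀ hn]; linarith
  have hsinpos : 0 < Real.sin (s / Real.sqrt n) := by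
    apply Real.sin_pos_of_pos_of_lt_pi hu0
    calc s / Real.sqrt n ≤ 2 := hu2
      _ < π := by linarith [Real.pi_gt_three]
  have hsincpos : 0 < Real.sin (s / Real.sqrt n) / (s / Real.sqrt n) := div_pos hsinpos hu0
  rw [Function.comp_apply, Real.exp_nat_mul, Real.exp_log hsincpos]

private lemma bound_integrable :
    Integrable (fun s : ℝ => Real.exp (-s ^ 2 / 6)) (volume.restrict (Set.Ioi 0)) := by
  have h : (fun s : ℝ => Real.exp (-s ^ 2 / 6)) = fun s => Real.exp (-(1/6) * s ^ 2) := by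
    funext s; ring_nf
  rw [h]
  exact (integrable_exp_neg_mul_sq (by norm_num : (0:ℝ) < 1/6)).restrict

private lemma main_lim : Tendsto (fun n : ℕ => ∫ s in Set.Ioi (0:ℝ),
      Set.indicator (Set.Ioc 0 (2 * Real.sqrt n))
        (fun x : ℝ => (Real.sin (x / Real.sqrt n) / (x / Real.sqrt n)) ^ n) s) atTop
    (nhds (∫ s in Set.Ioi (0:ℝ), Real.exp (-s ^ 2 / 6))) := by
  apply MeasureTheory.tendsto_integral_of_dominated_convergence
    (bound := fun s => Real.exp (-s ^ 2 / 6))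
  · intro n
    apply AEStronglyMeasurable.restrict
    apply Measurable.aestronglyMeasurable
    apply Measurable.indicator _ measurableSet_Ioc
    exact ((Real.measurable_sin.comp (measurable_id.div_const _)).div
      (measurable_id.div_const _)).pow_const n
  · exact bound_integrable
  · intro n
    rw [ae_restrict_iff' measurableSet_Ioi]
    apply Eventually.of_forall
    intro s hs
    by_cases hmem : s ∈ Set.Ioc 0 (2 * Real.sqrt n)
    · rw [Set.indicator_of_mem hmem]
      obtain ⟨hs0, hsle⟩ := hmem
      have hn : (0:ℝ) < Real.sqrt n := by nlinarith
      have hu0 : 0 < s / Real.sqrt n := div_pos hs0 hn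
      have hu2 : s / Real.sqrt n ≤ 2 := by rw [div_le_iff₀ hn]; linarith
      have hsinc0 : 0 ≤ Real.sin (s / Real.sqrt n) / (s / Real.sqrt n) := by
        apply div_nonneg _ hu0.le
        apply Real.sin_nonneg_of_nonneg_of_le_pi hu0.le
        linarith [Real.pi_gt_three]
      have hle := sinc_le_exp hu0 hu2
      have hpow : (Real.sin (s / Real.sqrt n) / (s / Real.sqrt n)) ^ n
          ≤ (Real.exp (-(s / Real.sqrt n) ^ 2 / 6)) ^ n :=
        pow_le_pow_left₀ hsinc0 hle n
      have hnn : n ≠ 0 := by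
        intro h
        rw [h] at hn
        simp at hn
      have hcast : ((n:ℝ)) ≠ 0 := Nat.cast_ne_zero.mpr hnn
      have hexp : (Real.exp (-(s / Real.sqrt n) ^ 2 / 6)) ^ n = Real.exp (-s ^ 2 / 6) := by
        rw [← Real.exp_nat_mul]
        congr 1
        have hsq : Real.sqrt n ^ 2 = (n : ℝ) := Real.sq_sqrt (Nat.cast_nonneg n)
        rw [div_pow, hsq]
        field_simp
      rw [Real.norm_eq_abs, abs_of_nonneg (pow_nonneg hsinc0 n)]
      rw [← hexp]
      exact hpow
    · rw [Set.indicator_of_notMem hmem]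
      simp [Real.exp_nonneg]
  · rw [ae_restrict_iff' measurableSet_Ioi]
    exact Eventually.of_forall (fun s hs => pointwise_lim hs)

private lemma A_eq {n : ℕ} (hn : 1 ≤ n) :
    (∫ s in Set.Ioi (0:ℝ), Set.indicator (Set.Ioc 0 (2 * Real.sqrt n))
        (fun x : ℝ => (Real.sin (x / Real.sqrt n) / (x / Real.sqrt n)) ^ n) s)
      = Real.sqrt n * ∫ t in Set.Ioc (0:ℝ) 2, (Real.sin t / t) ^ n := by
  have hn0 : (0:ℝ) < (n:ℝ) := by exact_mod_cast hn
  have hsn : (0:ℝ) < Real.sqrt n := Real.sqrt_pos.mpr hn0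
  rw [MeasureTheory.integral_indicator measurableSet_Ioc,
    MeasureTheory.Measure.restrict_restrict measurableSet_Ioc,
    Set.inter_eq_self_of_subset_left Set.Ioc_subset_Ioi_self]
  rw [← intervalIntegral.integral_of_le (by positivity : (0:ℝ) ≤ 2 * Real.sqrt n)]
  rw [intervalIntegral.integral_comp_div (fun t => (Real.sin t / t) ^ n) (ne_of_gt hsn)]
  rw [zero_div, mul_div_assoc, div_self (ne_of_gt hsn), mul_one]
  rw [intervalIntegral.integral_of_le (by norm_num : (0:ℝ) ≤ 2)]
  simp [smul_eq_mul]

private lemma sinc_meas (n : ℕ) : AEStronglyMeasurable (fun t : ℝ => (Real.sin t / t) ^ n) volume :=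
  ((Real.measurable_sin.div measurable_id).pow_const n).aestronglyMeasurable

private lemma integrableOn_Ioc02 (n : ℕ) :
    IntegrableOn (fun t : ℝ => (Real.sin t / t) ^ n) (Set.Ioc 0 2) volume := by
  apply MeasureTheory.Measure.integrableOn_of_bounded (M := 1) measure_Ioc_lt_top.ne (sinc_meas n)
  rw [ae_restrict_iff' measurableSet_Ioc]
  apply Eventually.of_forall
  intro t ht
  rw [Real.norm_eq_abs, abs_pow]
  apply pow_le_one₀ (abs_nonneg _)
  rw [abs_div]
  rcases eq_or_ne t 0 with h | h
  · simp [h]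
  · rw [div_le_one (abs_pos.mpr h)]
    exact Real.abs_sin_le_abs

private lemma tail_majorant {n : ℕ} (hn : 2 ≤ n) {t : ℝ} (ht : t ∈ Set.Ioi (2:ℝ)) :
    ‖(Real.sin t / t) ^ n‖ ≤ (1/2 : ℝ) ^ (n - 2) * t ^ (-2 : ℝ) := by
  have ht2 : (2:ℝ) < t := ht
  have ht0 : (0:ℝ) < t := by linarith
  have h1 : |Real.sin t / t| ≤ 1 / t := by
    rw [abs_div, abs_of_pos ht0]
    gcongr
    exact abs_le.mpr ⟨Real.neg_one_le_sin t, Real.sin_le_one t⟩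
  have hrpow : t ^ (-2:ℝ) = (1/t) ^ 2 := by
    rw [Real.rpow_neg ht0.le]
    rw [show ((2:ℝ):ℝ) = ((2:ℕ):ℝ) by norm_num, Real.rpow_natCast]
    rw [div_pow, one_pow, one_div]
  have heq : (1/t : ℝ) ^ n = (1/t) ^ 2 * (1/t) ^ (n - 2) := by
    rw [← pow_add]
    congr 1
    omega
  have h2 : (1/t : ℝ) ^ (n-2) ≤ (1/2 : ℝ) ^ (n-2) := by
    apply pow_le_pow_left₀ (by positivity)
    rw [div_le_div_iff_of_pos_left one_pos (by linarith) two_pos]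
    linarith
  calc ‖(Real.sin t / t) ^ n‖ = |Real.sin t / t| ^ n := by rw [Real.norm_eq_abs, abs_pow]
    _ ≤ (1/t) ^ n := pow_le_pow_left₀ (abs_nonneg _) h1 n
    _ = (1/t) ^ 2 * (1/t) ^ (n-2) := heq
    _ ≤ (1/t) ^ 2 * (1/2) ^ (n-2) := by
        apply mul_le_mul_of_nonneg_left h2 (by positivity)
    _ = (1/2) ^ (n-2) * t ^ (-2:ℝ) := by rw [hrpow]; ring

private lemma majorant_integrable (n : ℕ) :
    Integrable (fun t : ℝ => (1/2 : ℝ) ^ (n - 2) * t ^ (-2 : ℝ))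
      (volume.restrict (Set.Ioi (2:ℝ))) := by
  exact (integrableOn_Ioi_rpow_of_lt (by norm_num : (-2:ℝ) < -1)
    (by norm_num : (0:ℝ) < 2)).const_mul _

private lemma integrableOn_tail {n : ℕ} (hn : 2 ≤ n) :
    IntegrableOn (fun t : ℝ => (Real.sin t / t) ^ n) (Set.Ioi 2) volume := by
  apply Integrable.mono (majorant_integrable n) ((sinc_meas n).restrict)
  rw [ae_restrict_iff' measurableSet_Ioi]
  apply Eventually.of_forall
  intro t ht
  refine (tail_majorant hn ht).trans ?_
  have ht0 : (0:ℝ) < t := by have : (2:ℝ) < t := ht; linarith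
  rw [Real.norm_eq_abs]
  apply le_abs_self

private lemma tail_rpow_integral : ∫ t in Set.Ioi (2:ℝ), t ^ (-2:ℝ) = 1/2 := by
  rw [integral_Ioi_rpow_of_lt (by norm_num : (-2:ℝ) < -1) (by norm_num : (0:ℝ) < 2)]
  norm_num

private lemma tail_bound {n : ℕ} (hn : 2 ≤ n) :
    ‖∫ t in Set.Ioi (2:ℝ), (Real.sin t / t) ^ n‖ ≤ (1/2 : ℝ) ^ (n - 1) := by
  have h := MeasureTheory.norm_integral_le_of_norm_le (majorant_integrable n)
    (by rw [ae_restrict_iff' measurableSet_Ioi]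
        exact Eventually.of_forall (fun t ht => tail_majorant hn ht))
  refine h.trans ?_
  rw [MeasureTheory.integral_const_mul, tail_rpow_integral]
  rw [show n - 1 = (n - 2) + 1 by omega, pow_succ]

private lemma tail_lim : Tendsto (fun n : ℕ =>
    Real.sqrt n * ∫ t in Set.Ioi (2:ℝ), (Real.sin t / t) ^ n) atTop (nhds 0) := by
  apply squeeze_zero_norm' (a := fun n : ℕ => 2 * ((n:ℝ) * (1/2 : ℝ) ^ n))
  · filter_upwards [eventually_ge_atTop 2] with n hn
    have hn1 : (1:ℝ) ≤ (n:ℝ) := by exact_mod_cast (by omega : 1 ≤ n)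
    have hsn : Real.sqrt n ≤ (n:ℝ) := by
      rw [show ((n:ℝ)) = Real.sqrt ((n:ℝ)^2) from (Real.sqrt_sq (by linarith)).symm]
      apply Real.sqrt_le_sqrt
      rw [Real.sqrt_sq (by linarith)]
      nlinarith
    have hb := tail_bound hn
    rw [norm_mul, Real.norm_eq_abs (Real.sqrt n), abs_of_nonneg (Real.sqrt_nonneg _)]
    calc Real.sqrt n * ‖∫ t in Set.Ioi (2:ℝ), (Real.sin t / t) ^ n‖
        ≤ (n:ℝ) * (1/2 : ℝ) ^ (n - 1) := by
          apply mul_le_mul hsn hb (norm_nonneg _) (by linarith)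
      _ = 2 * ((n:ℝ) * (1/2 : ℝ) ^ n) := by
          rw [show n = (n - 1) + 1 by omega]
          simp only [Nat.add_sub_cancel]
          rw [pow_succ]
          ring
  · have hs : Summable (fun n : ℕ => (n:ℝ) ^ 1 * (1/2 : ℝ) ^ n) :=
      summable_pow_mul_geometric_of_norm_lt_one 1 (by rw [Real.norm_eq_abs, abs_of_pos] <;> norm_num)
    have := hs.tendsto_atTop_zero.const_mul 2
    simp only [pow_one] at this
    simpa using this


end Aux

/-- `I n → √(6/π)` as `n → ∞`; hence the upper bound `√(6/π)` is best possible. -/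
theorem I_tendsto_sqrt_six_div_pi :
    Tendsto I atTop (nhds (Real.sqrt (6 / Real.pi))) := by
  have hπ := Real.pi_pos
  have hA : Tendsto (fun n : ℕ => Real.sqrt n * ∫ t in Set.Ioc (0:ℝ) 2, (Real.sin t / t) ^ n)
      atTop (nhds (∫ s in Set.Ioi (0:ℝ), Real.exp (-s ^ 2 / 6))) := by
    apply main_lim.congr'
    filter_upwards [eventually_ge_atTop 1] with n hn
    exact A_eq hn
  have hG : (∫ s in Set.Ioi (0:ℝ), Real.exp (-s ^ 2 / 6)) = Real.sqrt (6 * Real.pi) / 2 := by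
    have h := integral_gaussian_Ioi (1/6)
    have heq : ∀ s : ℝ, Real.exp (-(1/6) * s ^ 2) = Real.exp (-s ^ 2 / 6) := by
      intro s; ring_nf
    simp only [heq] at h
    rw [h]
    congr 1
    rw [show Real.pi / (1/6) = 6 * Real.pi by ring]
  rw [hG] at hA
  have hcomb := (hA.const_mul (2 / Real.pi)).add (tail_lim.const_mul (2 / Real.pi))
  have hval : 2 / Real.pi * (Real.sqrt (6 * Real.pi) / 2) + 2 / Real.pi * 0
      = Real.sqrt (6 / Real.pi) := by
    rw [mul_zero, add_zero]
    rw [show (6:ℝ) / Real.pi = (6 * Real.pi) / Real.pi ^ 2 by field_simp]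
    rw [Real.sqrt_div (by positivity) (Real.pi ^ 2), Real.sqrt_sq hπ.le]
    field_simp
  rw [hval] at hcomb
  apply hcomb.congr'
  filter_upwards [eventually_ge_atTop 2] with n hn
  have hsplit : (∫ t in Set.Ioi (0:ℝ), (Real.sin t / t) ^ n)
      = (∫ t in Set.Ioc (0:ℝ) 2, (Real.sin t / t) ^ n)
        + ∫ t in Set.Ioi (2:ℝ), (Real.sin t / t) ^ n := by
    rw [← MeasureTheory.setIntegral_union (Set.Ioc_disjoint_Ioi le_rfl) measurableSet_Ioi
      (integrableOn_Ioc02 n) (integrableOn_tail hn)]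
    rw [Set.Ioc_union_Ioi_eq_Ioi (by norm_num : (0:ℝ) ≤ 2)]
  show _ = I n
  rw [I, hsplit]
  ring
end

section
/- For every integer n ≥ 3, (2√n/π) ∫₁^∞ e^{−n x²/6} (1 + x²/20 + 13x⁴/30240) dx < 5 e^{−n/6}. -/
open MeasureTheory Real Filter

/-- For `n ≥ 3`, `(2√n/π) ∫₁^∞ e^{-n x²/6}(1 + x²/20 + 13x⁴/30240) dx < 5 e^{-n/6}`. -/
theorem gaussian_tail_lt (n : ℕ) (hn : 3 ≤ n) :
    2 * Real.sqrt n / Real.pi *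
        ∫ x in Set.Ioi (1 : ℝ),
          Real.exp (-(n : ℝ) * x ^ 2 / 6) * (1 + x ^ 2 / 20 + 13 * x ^ 4 / 30240)
      < 5 * Real.exp (-(n : ℝ) / 6) := by
  have hN : (3 : ℝ) ≤ (n : ℝ) := by exact_mod_cast hn
  set N : ℝ := (n : ℝ) with hNdef
  obtain ⟨a, ha_def⟩ : ∃ a : ℝ, a = (2 * N - 1) / 12 := ⟨_, rfl⟩
  have ha : 0 < a := by rw [ha_def]; linarith
  -- the antiderivative of x * exp (-a x²)
  have hderiv : ∀ x ∈ Set.Ici (1 : ℝ),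
      HasDerivAt (fun x : ℝ => -Real.exp (-a * x ^ 2) / (2 * a))
        (x * Real.exp (-a * x ^ 2)) x := by
    intro x _
    have h1 : HasDerivAt (fun x : ℝ => -a * x ^ 2) (-a * (2 * x)) x := by
      simpa using (hasDerivAt_pow 2 x).const_mul (-a)
    have h2 := ((h1.exp).div_const (2 * a)).neg
    refine (h2.congr_deriv ?_).congr_of_eventuallyEq ?_
    · field_simp [ha.ne']
    · exact Filter.Eventually.of_forall fun y => by simp [neg_div]
  have htend : Tendsto (fun x : ℝ => -Real.exp (-a * x ^ 2) / (2 * a)) atTop (nhds 0) := by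
    have h1 : Tendsto (fun x : ℝ => -a * x ^ 2) atTop atBot := by
      have := (tendsto_pow_atTop (n := 2) (by norm_num)).const_mul_atTop ha
      have h2 := tendsto_neg_atTop_atBot.comp this
      refine h2.congr fun x => ?_
      simp [Function.comp]
    have h3 := (Real.tendsto_exp_atBot.comp h1).neg.div_const (2 * a)
    simpa using h3
  have hpos : ∀ x ∈ Set.Ioi (1 : ℝ), 0 ≤ x * Real.exp (-a * x ^ 2) := by
    intro x hx
    have : (0 : ℝ) < x := lt_trans one_pos hx
    positivity
  have hIntg : IntegrableOn (fun x : ℝ => x * Real.exp (-a * x ^ 2)) (Set.Ioi 1) :=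
    integrableOn_Ioi_deriv_of_nonneg' hderiv hpos htend
  have hval : ∫ x in Set.Ioi (1 : ℝ), x * Real.exp (-a * x ^ 2) = Real.exp (-a) / (2 * a) := by
    rw [integral_Ioi_of_hasDerivAt_of_nonneg' hderiv hpos htend]
    norm_num [neg_div]
  -- pointwise bound
  have hbound : ∀ x ∈ Set.Ioi (1 : ℝ),
      Real.exp (-N * x ^ 2 / 6) * (1 + x ^ 2 / 20 + 13 * x ^ 4 / 30240)
        ≤ 2 * (x * Real.exp (-a * x ^ 2)) := by
    intro x hx
    have hx1 : (1 : ℝ) ≤ x := le_of_lt hx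
    have hE : (1 + x ^ 2 / 24) ^ 2 ≤ Real.exp (x ^ 2 / 12) := by
      have h1 : 1 + x ^ 2 / 24 ≤ Real.exp (x ^ 2 / 24) := by
        have := Real.add_one_le_exp (x ^ 2 / 24)
        linarith
      have h2 : (1 + x ^ 2 / 24) ^ 2 ≤ Real.exp (x ^ 2 / 24) ^ 2 := by
        apply pow_le_pow_left₀ (by positivity) h1
      calc (1 + x ^ 2 / 24) ^ 2 ≤ Real.exp (x ^ 2 / 24) ^ 2 := h2
        _ = Real.exp (x ^ 2 / 12) := by
          rw [sq, ← Real.exp_add]; ring_nf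
    have hP : 1 + x ^ 2 / 20 + 13 * x ^ 4 / 30240 ≤ 2 * (1 + x ^ 2 / 24) ^ 2 := by
      nlinarith [sq_nonneg x, sq_nonneg (x ^ 2)]
    have step1 : Real.exp (-N * x ^ 2 / 6) * (1 + x ^ 2 / 20 + 13 * x ^ 4 / 30240)
        ≤ Real.exp (-N * x ^ 2 / 6) * (2 * Real.exp (x ^ 2 / 12)) := by
      apply mul_le_mul_of_nonneg_left _ (le_of_lt (Real.exp_pos _))
      calc 1 + x ^ 2 / 20 + 13 * x ^ 4 / 30240 ≤ 2 * (1 + x ^ 2 / 24) ^ 2 := hP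
        _ ≤ 2 * Real.exp (x ^ 2 / 12) := by linarith
    have step2 : Real.exp (-N * x ^ 2 / 6) * (2 * Real.exp (x ^ 2 / 12))
        = 2 * Real.exp (-a * x ^ 2) := by
      rw [show (2 : ℝ) * Real.exp (-a * x ^ 2)
          = 2 * (Real.exp (-N * x ^ 2 / 6) * Real.exp (x ^ 2 / 12)) by
        rw [← Real.exp_add]
        congr 1
        rw [ha_def]; ring]
      ring
    have step3 : 2 * Real.exp (-a * x ^ 2) ≤ 2 * (x * Real.exp (-a * x ^ 2)) := by
      have := Real.exp_pos (-a * x ^ 2)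
      nlinarith
    linarith [step1, step2 ▸ step1]
  -- integrability of the integrand
  have hcont : Continuous fun x : ℝ =>
      Real.exp (-N * x ^ 2 / 6) * (1 + x ^ 2 / 20 + 13 * x ^ 4 / 30240) := by
    fun_prop
  have hIntf : IntegrableOn (fun x : ℝ =>
      Real.exp (-N * x ^ 2 / 6) * (1 + x ^ 2 / 20 + 13 * x ^ 4 / 30240)) (Set.Ioi 1) := by
    apply Integrable.mono' (hIntg.const_mul 2) hcont.aestronglyMeasurable.restrict
    filter_upwards [ae_restrict_mem measurableSet_Ioi] with x hx
    rw [Real.norm_of_nonneg (by positivity)]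
    exact hbound x hx
  -- compare integrals
  have hIle : (∫ x in Set.Ioi (1 : ℝ),
        Real.exp (-N * x ^ 2 / 6) * (1 + x ^ 2 / 20 + 13 * x ^ 4 / 30240))
      ≤ Real.exp (-a) / a := by
    have h1 := setIntegral_mono_on hIntf (hIntg.const_mul 2) measurableSet_Ioi hbound
    have h2 : ∫ x in Set.Ioi (1 : ℝ), 2 * (x * Real.exp (-a * x ^ 2))
        = Real.exp (-a) / a := by
      rw [integral_const_mul, hval]
      field_simp
    linarith [h2 ▸ h1]
  -- numerics
  have hsN : Real.sqrt N ≤ Real.sqrt 3 * (2 * N - 1) / 5 := by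
    have h1 : Real.sqrt N ≤ Real.sqrt (3 * ((2 * N - 1) / 5) ^ 2) :=
      Real.sqrt_le_sqrt (by nlinarith)
    rwa [Real.sqrt_mul (by norm_num), Real.sqrt_sq (by linarith), ← mul_div_assoc] at h1
  have h3le : Real.sqrt 3 ≤ 1.8 := by
    rw [show (1.8 : ℝ) = Real.sqrt 3.24 by
      rw [show (3.24 : ℝ) = 1.8 ^ 2 by norm_num, Real.sqrt_sq (by norm_num)]]
    exact Real.sqrt_le_sqrt (by norm_num)
  have hEle : Real.exp (1 / 12) ≤ 12 / 11 := by
    have h1 := Real.add_one_le_exp (-(1 / 12) : ℝ)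
    have h2 : Real.exp (1 / 12) * Real.exp (-(1 / 12)) = 1 := by
      rw [← Real.exp_add]; norm_num
    nlinarith [Real.exp_pos ((1 : ℝ) / 12), Real.exp_pos (-(1 / 12) : ℝ)]
  have hpi := Real.pi_gt_three
  have hs0 : 0 ≤ Real.sqrt N := Real.sqrt_nonneg N
  have hkey : 2 * Real.sqrt N * Real.exp (1 / 12) < 5 * Real.pi * a := by
    have hs2 : Real.sqrt N ≤ 0.36 * (2 * N - 1) := by nlinarith
    have hsE : Real.sqrt N * Real.exp (1 / 12) ≤ 0.36 * (2 * N - 1) * (12 / 11) :=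
      mul_le_mul hs2 hEle (le_of_lt (Real.exp_pos _)) (by nlinarith)
    rw [ha_def]
    nlinarith
  -- assemble
  have hXpos : (0 : ℝ) < Real.exp (-N / 6) := Real.exp_pos _
  have hEsplit : Real.exp (-a) = Real.exp (1 / 12) * Real.exp (-N / 6) := by
    rw [← Real.exp_add]
    congr 1
    rw [ha_def]; ring
  have hc : 0 ≤ 2 * Real.sqrt N / Real.pi := by positivity
  calc 2 * Real.sqrt N / Real.pi *
        ∫ x in Set.Ioi (1 : ℝ),
          Real.exp (-N * x ^ 2 / 6) * (1 + x ^ 2 / 20 + 13 * x ^ 4 / 30240)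
      ≤ 2 * Real.sqrt N / Real.pi * (Real.exp (-a) / a) :=
        mul_le_mul_of_nonneg_left hIle hc
    _ = 2 * Real.sqrt N * Real.exp (1 / 12) * Real.exp (-N / 6) / (Real.pi * a) := by
        rw [hEsplit]; ring
    _ < 5 * Real.exp (-N / 6) := by
        rw [div_lt_iff₀ (by positivity)]
        calc 2 * Real.sqrt N * Real.exp (1 / 12) * Real.exp (-N / 6)
            < 5 * Real.pi * a * Real.exp (-N / 6) := by
              exact mul_lt_mul_of_pos_right hkey hXpos
          _ = 5 * Real.exp (-N / 6) * (Real.pi * a) := by ring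
end

section
/- The function x(t) = √(−6 log((sin t)/t)) is strictly increasing on [0, 1.1], satisfies x(t) ≤ 1.123841 for all t ∈ [0, 1.1], and maps [0, 1.1] bijectively onto [0, x(1.1)]. -/
open Real Set Topology Filter


private lemma nonneg_of_deriv (f : ℝ → ℝ) (hd : Differentiable ℝ f) (h0 : f 0 = 0)
    (hf' : ∀ x : ℝ, 0 < x → 0 ≤ deriv f x) : ∀ x : ℝ, 0 ≤ x → 0 ≤ f x := by
  intro x hx
  have hm : MonotoneOn f (Ici 0) := by
    apply monotoneOn_of_deriv_nonneg (convex_Ici 0) hd.continuous.continuousOn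
      hd.differentiableOn
    intro y hy
    rw [interior_Ici] at hy
    exact hf' y hy
  calc (0:ℝ) = f 0 := h0.symm
    _ ≤ f x := hm self_mem_Ici hx hx

private lemma sinA {x : ℝ} (hx : 0 ≤ x) : x - x^3/6 ≤ Real.sin x := by
  have h := nonneg_of_deriv (fun x => Real.sin x - x + x^3/6) (by fun_prop) (by norm_num)
    (fun y hy => by
      have hder : deriv (fun x => Real.sin x - x + x^3/6) y = Real.cos y - 1 + 3*y^2/6 := by
        have h1 : HasDerivAt (fun x : ℝ => Real.sin x - x + x^3/6)
            (Real.cos y - 1 + ((3:ℕ) * y^(3-1))/6) y :=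
          ((Real.hasDerivAt_sin y).sub (hasDerivAt_id y)).add ((hasDerivAt_pow 3 y).div_const 6)
        simpa using h1.deriv
      rw [hder]
      have := Real.one_sub_sq_div_two_le_cos (x := y)
      nlinarith) x hx
  linarith

private lemma cosB {x : ℝ} (hx : 0 ≤ x) : Real.cos x ≤ 1 - x^2/2 + x^4/24 := by
  have h := nonneg_of_deriv (fun x => 1 - x^2/2 + x^4/24 - Real.cos x) (by fun_prop) (by norm_num)
    (fun y hy => by
      have hder : deriv (fun x : ℝ => 1 - x^2/2 + x^4/24 - Real.cos x) y
          = -(2*y^1/2) + 4*y^3/24 - (-Real.sin y) := by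
        have h1 : HasDerivAt (fun x : ℝ => 1 - x^2/2 + x^4/24 - Real.cos x)
            (0 - ((2:ℕ)*y^(2-1))/2 + ((4:ℕ)*y^(4-1))/24 - (-Real.sin y)) y :=
          (((hasDerivAt_const y (1:ℝ)).sub ((hasDerivAt_pow 2 y).div_const 2)).add
            ((hasDerivAt_pow 4 y).div_const 24)).sub (Real.hasDerivAt_cos y)
        simpa using h1.deriv
      rw [hder]
      have := sinA hy.le
      nlinarith) x hx
  linarith

private lemma sinC {x : ℝ} (hx : 0 ≤ x) : Real.sin x ≤ x - x^3/6 + x^5/120 := by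
  have h := nonneg_of_deriv (fun x => x - x^3/6 + x^5/120 - Real.sin x) (by fun_prop) (by norm_num)
    (fun y hy => by
      have hder : deriv (fun x : ℝ => x - x^3/6 + x^5/120 - Real.sin x) y
          = 1 - 3*y^2/6 + 5*y^4/120 - Real.cos y := by
        have h1 : HasDerivAt (fun x : ℝ => x - x^3/6 + x^5/120 - Real.sin x)
            (1 - ((3:ℕ)*y^(3-1))/6 + ((5:ℕ)*y^(5-1))/120 - Real.cos y) y :=
          (((hasDerivAt_id y).sub ((hasDerivAt_pow 3 y).div_const 6)).add
            ((hasDerivAt_pow 5 y).div_const 120)).sub (Real.hasDerivAt_sin y)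
        simpa using h1.deriv
      rw [hder]
      have := cosB hy.le
      nlinarith) x hx
  linarith

private lemma cosD {x : ℝ} (hx : 0 ≤ x) : 1 - x^2/2 + x^4/24 - x^6/720 ≤ Real.cos x := by
  have h := nonneg_of_deriv (fun x => Real.cos x - (1 - x^2/2 + x^4/24 - x^6/720))
    (by fun_prop) (by norm_num)
    (fun y hy => by
      have hder : deriv (fun x : ℝ => Real.cos x - (1 - x^2/2 + x^4/24 - x^6/720)) y
          = -Real.sin y - (-(2*y^1/2) + 4*y^3/24 - 6*y^5/720) := by
        have h1 : HasDerivAt (fun x : ℝ => Real.cos x - (1 - x^2/2 + x^4/24 - x^6/720))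
            (-Real.sin y - (0 - ((2:ℕ)*y^(2-1))/2 + ((4:ℕ)*y^(4-1))/24 - ((6:ℕ)*y^(6-1))/720)) y :=
          (Real.hasDerivAt_cos y).sub
            ((((hasDerivAt_const y (1:ℝ)).sub ((hasDerivAt_pow 2 y).div_const 2)).add
              ((hasDerivAt_pow 4 y).div_const 24)).sub ((hasDerivAt_pow 6 y).div_const 720))
        simpa using h1.deriv
      rw [hder]
      have := sinC hy.le
      nlinarith) x hx
  linarith

private lemma sinE {x : ℝ} (hx : 0 ≤ x) : x - x^3/6 + x^5/120 - x^7/5040 ≤ Real.sin x := by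
  have h := nonneg_of_deriv (fun x => Real.sin x - (x - x^3/6 + x^5/120 - x^7/5040))
    (by fun_prop) (by norm_num)
    (fun y hy => by
      have hder : deriv (fun x : ℝ => Real.sin x - (x - x^3/6 + x^5/120 - x^7/5040)) y
          = Real.cos y - (1 - 3*y^2/6 + 5*y^4/120 - 7*y^6/5040) := by
        have h1 : HasDerivAt (fun x : ℝ => Real.sin x - (x - x^3/6 + x^5/120 - x^7/5040))
            (Real.cos y - (1 - ((3:ℕ)*y^(3-1))/6 + ((5:ℕ)*y^(5-1))/120 - ((7:ℕ)*y^(7-1))/5040)) y :=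
          (Real.hasDerivAt_sin y).sub
            ((((hasDerivAt_id y).sub ((hasDerivAt_pow 3 y).div_const 6)).add
              ((hasDerivAt_pow 5 y).div_const 120)).sub ((hasDerivAt_pow 7 y).div_const 5040))
        simpa using h1.deriv
      rw [hder]
      have := cosD hy.le
      nlinarith) x hx
  linarith

private lemma pi_half_gt : (1.1:ℝ) < π/2 := by
  have := Real.pi_gt_d6
  linarith

private lemma sin_div_anti : StrictAntiOn (fun t => Real.sin t / t) (Ioc (0:ℝ) 1.1) := by
  apply strictAntiOn_of_deriv_neg (convex_Ioc 0 1.1)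
  · exact Real.continuous_sin.continuousOn.div continuousOn_id (fun x hx => ne_of_gt hx.1)
  · intro x hx
    rw [interior_Ioc] at hx
    have hx0 : 0 < x := hx.1
    have hx2 : x < π/2 := hx.2.trans pi_half_gt
    have hcos : 0 < Real.cos x := Real.cos_pos_of_mem_Ioo ⟨by linarith, hx2⟩
    have htan : x < Real.tan x := Real.lt_tan hx0 hx2
    rw [Real.tan_eq_sin_div_cos, lt_div_iff₀ hcos] at htan
    have hder : deriv (fun t => Real.sin t / t) x
        = (Real.cos x * x - Real.sin x * 1) / x^2 := by
      have h1 : HasDerivAt (fun t => Real.sin t / t) ((Real.cos x * id x - Real.sin x * 1) / (id x)^2) x :=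
        (Real.hasDerivAt_sin x).div (hasDerivAt_id x) (ne_of_gt hx0)
      simpa using h1.deriv
    rw [hder]
    apply div_neg_of_neg_of_pos
    · nlinarith
    · positivity

private lemma numeric_key : Real.exp (-(1.123841^2/6)) ≤ Real.sin 1.1 / 1.1 := by
  set c : ℝ := 1.123841^2/6 with hc
  have hc0 : (0:ℝ) ≤ c := by rw [hc]; norm_num
  have hS : 1 + c + c^2/2 + c^3/6 + c^4/24 ≤ Real.exp c := by
    have h := Real.sum_le_exp_of_nonneg hc0 5
    norm_num [Finset.sum_range_succ, Nat.factorial] at h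
    linarith
  have hsin : (0.8912009:ℝ) ≤ Real.sin 1.1 := by
    have h := sinE (x := (1.1:ℝ)) (by norm_num)
    norm_num at h
    linarith
  have hSpos : (0:ℝ) < 1 + c + c^2/2 + c^3/6 + c^4/24 := by positivity
  rw [Real.exp_neg]
  have h2 : (Real.exp c)⁻¹ ≤ (1 + c + c^2/2 + c^3/6 + c^4/24)⁻¹ :=
    inv_anti₀ hSpos hS
  refine h2.trans ?_
  rw [inv_eq_one_div, div_le_div_iff₀ hSpos (by norm_num : (0:ℝ) < 1.1)]
  have key : (1:ℝ) * 1.1 ≤ 0.8912009 * (1 + c + c^2/2 + c^3/6 + c^4/24) := by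
    rw [hc]; norm_num
  refine key.trans ?_
  have := mul_le_mul_of_nonneg_right hsin hSpos.le
  linarith


/-- `x(t) = √(-6 log((sin t)/t))`, with `(sin t)/t` taken to be `1` at `t = 0`. -/
noncomputable def xfun (t : ℝ) : ℝ :=
  Real.sqrt (-6 * Real.log (if t = 0 then 1 else Real.sin t / t))

/-- `x(t)` is strictly increasing on `[0, 1.1]`, bounded above by `1.123841` there,
and maps `[0, 1.1]` bijectively onto `[0, x(1.1)]`. -/
theorem xfun_strictMono_bound_bijOn :
    StrictMonoOn xfun (Icc (0 : ℝ) 1.1) ∧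
    (∀ t ∈ Icc (0 : ℝ) 1.1, xfun t ≤ 1.123841) ∧
    BijOn xfun (Icc (0 : ℝ) 1.1) (Icc 0 (xfun 1.1)) := by
  have hpi : (1.1:ℝ) < π := by have := Real.pi_gt_d6; linarith
  set g : ℝ → ℝ := fun t => if t = 0 then 1 else Real.sin t / t with hg
  have hxeq : ∀ t, xfun t = Real.sqrt (-6 * Real.log (g t)) := fun t => rfl
  have hgpos : ∀ t ∈ Icc (0:ℝ) 1.1, 0 < g t := by
    intro t ht
    rcases eq_or_lt_of_le ht.1 with h0 | h0
    · simp [hg, ← h0]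
    · have hs : 0 < Real.sin t := Real.sin_pos_of_pos_of_lt_pi h0 (lt_of_le_of_lt ht.2 hpi)
      simp only [hg, if_neg (ne_of_gt h0)]
      positivity
  have hgle : ∀ t ∈ Icc (0:ℝ) 1.1, g t ≤ 1 := by
    intro t ht
    rcases eq_or_lt_of_le ht.1 with h0 | h0
    · simp [hg, ← h0]
    · simp only [hg, if_neg (ne_of_gt h0)]
      rw [div_le_one h0]
      exact Real.sin_le h0.le
  have hganti : StrictAntiOn g (Icc (0:ℝ) 1.1) := by
    intro s hs t ht hst
    rcases eq_or_lt_of_le hs.1 with h0 | h0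
    · have ht0 : 0 < t := by rw [← h0] at hst; exact hst
      simp only [hg, if_neg (ne_of_gt ht0), ← h0, if_pos rfl]
      rw [div_lt_one ht0]
      exact Real.sin_lt ht0
    · have h := sin_div_anti ⟨h0, hs.2⟩ ⟨h0.trans hst, ht.2⟩ hst
      simpa only [hg, if_neg (ne_of_gt h0), if_neg (ne_of_gt (h0.trans hst))] using h
  have hF0 : ∀ t ∈ Icc (0:ℝ) 1.1, 0 ≤ -6 * Real.log (g t) := by
    intro t ht
    have := Real.log_nonpos (hgpos t ht).le (hgle t ht)
    linarith
  have hmono : StrictMonoOn xfun (Icc (0:ℝ) 1.1) := by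
    intro s hs t ht hst
    rw [hxeq, hxeq]
    apply Real.sqrt_lt_sqrt (hF0 s hs)
    have hlt : Real.log (g t) < Real.log (g s) :=
      Real.log_lt_log (hgpos t ht) (hganti hs ht hst)
    linarith
  have hmem : (1.1:ℝ) ∈ Icc (0:ℝ) 1.1 := by constructor <;> norm_num
  have hbound : ∀ t ∈ Icc (0:ℝ) 1.1, xfun t ≤ 1.123841 := by
    have h11 : xfun 1.1 ≤ 1.123841 := by
      rw [hxeq]
      rw [Real.sqrt_le_iff]
      refine ⟨by norm_num, ?_⟩
      have hr : (0:ℝ) < g 1.1 := hgpos 1.1 hmem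
      have hgval : g 1.1 = Real.sin 1.1 / 1.1 := by
        simp only [hg, if_neg (by norm_num : (1.1:ℝ) ≠ 0)]
      rw [hgval] at hr ⊢
      have hlog := (Real.le_log_iff_exp_le hr).2 numeric_key
      linarith
    intro t ht
    rcases eq_or_lt_of_le ht.2 with h | h
    · rw [h]; exact h11
    · exact le_of_lt (lt_of_lt_of_le (hmono ht hmem h) h11)
  have hx0 : xfun 0 = 0 := by
    rw [hxeq]
    simp [hg]
  -- continuity
  have hgcont : ContinuousOn g (Icc (0:ℝ) 1.1) := by
    intro t ht
    rcases eq_or_ne t 0 with rfl | ht0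
    · rw [← continuousWithinAt_diff_self]
      have h1 : Filter.Tendsto (fun u => Real.sin u / u) (𝓝[≠] (0:ℝ)) (𝓝 1) := by
        have h2 := Real.hasDerivAt_sin 0
        rw [hasDerivAt_iff_tendsto_slope] at h2
        simpa [slope_fun_def, Real.sin_zero, Real.cos_zero, div_eq_inv_mul] using h2
      have hsub : 𝓝[Icc (0:ℝ) 1.1 \ {0}] (0:ℝ) ≤ 𝓝[≠] (0:ℝ) :=
        nhdsWithin_mono _ (fun x hx => hx.2)
      have h3 : Filter.Tendsto g (𝓝[Icc (0:ℝ) 1.1 \ {0}] (0:ℝ)) (𝓝 1) := by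
        apply (h1.mono_left hsub).congr'
        filter_upwards [self_mem_nhdsWithin] with x hx
        simp only [hg, if_neg (by exact hx.2 : x ≠ 0)]
      have hg0 : g 0 = 1 := by simp [hg]
      rw [ContinuousWithinAt, hg0]
      exact h3
    · have hc : ContinuousWithinAt (fun u => Real.sin u / u) (Icc (0:ℝ) 1.1) t :=
        (Real.continuous_sin.continuousAt.div continuousAt_id ht0).continuousWithinAt
      apply hc.congr_of_eventuallyEq
      · filter_upwards [mem_nhdsWithin_of_mem_nhds (eventually_ne_nhds ht0)] with x hx
        simp only [hg, if_neg hx]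
      · simp only [hg, if_neg ht0]
  have hcont : ContinuousOn xfun (Icc (0:ℝ) 1.1) := by
    have hxf : xfun = fun t => Real.sqrt (-6 * Real.log (g t)) := rfl
    rw [hxf]
    exact Real.continuous_sqrt.comp_continuousOn
      (continuousOn_const.mul (hgcont.log (fun t ht => (hgpos t ht).ne')))
  refine ⟨hmono, hbound, ?_, hmono.injOn, ?_⟩
  · intro t ht
    refine ⟨Real.sqrt_nonneg _, ?_⟩
    rcases eq_or_lt_of_le ht.2 with h | h
    · rw [h]
    · exact le_of_lt (hmono ht hmem h)
  · have h := intermediate_value_Icc (by norm_num : (0:ℝ) ≤ 1.1) hcont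
    rw [hx0] at h
    exact h
end

section
/- Let f(t) = (sin t)/t for t > 0 and f(0) = 1. Then for all integers m ≥ 0 and N with 2N ≥ m, and all real t ≥ 0, | (1/m!) f⁽ᵐ⁾(t) − (1/m!) ∑_{⌈m/2⌉ ≤ k ≤ N} (−1)^k t^{2k−m} / ((2k−m)! (2k+1)) | ≤ (1/m!) e^t t^{2N+2−m} / (2N+2−m)!. -/
open Real Finset

noncomputable def scCoeff (m j : ℕ) : ℝ :=
  if Even (j + m) then
    (-1 : ℝ) ^ ((j + m) / 2) * ((j + m).descFactorial m : ℝ) / ((j + m + 1).factorial : ℝ)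
  else 0

lemma abs_scCoeff_le (m j : ℕ) : |scCoeff m j| ≤ 1 / (j.factorial : ℝ) := by
  unfold scCoeff
  split_ifs with h
  · rw [abs_div, abs_mul, abs_pow, abs_neg, abs_one, one_pow, one_mul,
      Nat.abs_cast, Nat.abs_cast]
    rw [div_le_div_iff₀ (by positivity) (by positivity), one_mul]
    have h1 : (j + m).descFactorial m * j.factorial = (j + m).factorial := by
      have := Nat.factorial_mul_descFactorial (Nat.le_add_left m j)
      simpa [Nat.add_sub_cancel, mul_comm] using this
    have h2 : ((j + m).descFactorial m : ℝ) * (j.factorial : ℝ) = ((j+m).factorial : ℝ) := by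
      exact_mod_cast congrArg (Nat.cast (R := ℝ)) h1
    rw [h2]
    exact_mod_cast Nat.factorial_le (Nat.le_succ _)
  · rw [abs_zero]; positivity

lemma scCoeff_succ (m j : ℕ) : scCoeff (m + 1) j = ((j : ℝ) + 1) * scCoeff m (j + 1) := by
  unfold scCoeff
  have he : (j + (m + 1)) = (j + 1) + m := by ring
  rw [he]
  split_ifs with h
  · have hd : ((j + 1) + m).descFactorial (m + 1) = (j + 1) * ((j + 1) + m).descFactorial m := by
      rw [Nat.descFactorial_succ]
      congr 1
      omega
    rw [hd]
    push_cast
    ring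
  · ring

/-- `f(t) = (sin t)/t` for `t ≠ 0`, with `f(0) = 1`. -/
noncomputable def sinc' (t : ℝ) : ℝ := if t = 0 then 1 else Real.sin t / t

lemma hasSum_sinc (t : ℝ) : HasSum (fun j => scCoeff 0 j * t ^ j) (sinc' t) := by
  have hinj : Function.Injective (fun k : ℕ => 2 * k) := fun a b h => by simpa using h
  have hzero : ∀ j ∉ Set.range (fun k : ℕ => 2 * k), scCoeff 0 j * t ^ j = 0 := by
    intro j hj
    have : ¬ Even (j + 0) := by
      simp only [Nat.add_zero]
      intro ⟨r, hr⟩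
      exact hj ⟨r, by simp; omega⟩
    rw [scCoeff, if_neg this, zero_mul]
  rw [← hinj.hasSum_iff hzero]
  have hcomp : (fun k : ℕ => scCoeff 0 (2 * k) * t ^ (2 * k)) =
      fun k : ℕ => (-1 : ℝ) ^ k * t ^ (2 * k) / ((2 * k + 1).factorial : ℝ) := by
    funext k
    rw [scCoeff, if_pos (by rw [Nat.add_zero]; exact ⟨k, by omega⟩)]
    simp only [Nat.add_zero, Nat.descFactorial_zero, Nat.cast_one, mul_one]
    rw [Nat.mul_div_cancel_left k (by norm_num)]
    ring
  show HasSum (fun k : ℕ => scCoeff 0 (2 * k) * t ^ (2 * k)) (sinc' t)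
  rw [hcomp]
  rcases eq_or_ne t 0 with rfl | ht
  · have : (fun k : ℕ => (-1 : ℝ) ^ k * (0:ℝ) ^ (2 * k) / ((2 * k + 1).factorial : ℝ)) =
        fun k : ℕ => if k = 0 then (1:ℝ) else 0 := by
      funext k
      rcases Nat.eq_zero_or_pos k with rfl | hk
      · simp
      · rw [if_neg (by omega), zero_pow (by omega), mul_zero, zero_div]
    rw [this]
    have : sinc' 0 = 1 := by simp [sinc']
    rw [this]
    simpa using hasSum_ite_eq (0 : ℕ) (1 : ℝ)
  · have h1 := (Real.hasSum_sin t).div_const t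
    have : sinc' t = Real.sin t / t := by simp [sinc', ht]
    rw [this]
    have e : (fun k : ℕ => (-1 : ℝ) ^ k * t ^ (2 * k) / ((2 * k + 1).factorial : ℝ)) =
        fun k : ℕ => (-1 : ℝ) ^ k * t ^ (2 * k + 1) / ((2 * k + 1).factorial : ℝ) / t := by
      funext k
      rw [pow_succ]
      field_simp
    rw [e]; exact h1

lemma hasSum_iteratedDeriv_sinc (m : ℕ) :
    ∀ t : ℝ, HasSum (fun j => scCoeff m j * t ^ j) (iteratedDeriv m sinc' t) := by
  induction m with
  | zero => intro t; simpa [iteratedDeriv_zero] using hasSum_sinc t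
  | succ m IH =>
    intro t
    set R : ℝ := |t| + 1 with hR
    have hR1 : (1 : ℝ) ≤ R := by rw [hR]; nlinarith [abs_nonneg t]
    have hRpos : (0 : ℝ) < R := by positivity
    set u : ℕ → ℝ := fun j => (2 * R) ^ j / (j.factorial : ℝ) with hu_def
    have hu : Summable u := Real.summable_pow_div_factorial (2 * R)
    have hbound : ∀ (j : ℕ) (y : ℝ), y ∈ Set.Ioo (-R) R →
        ‖scCoeff m j * ((j : ℝ) * y ^ (j - 1))‖ ≤ u j := by
      intro j y hy
      have hyR : |y| ≤ R := by
        rw [abs_le]; exact ⟨hy.1.le, hy.2.le⟩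
      have h1 : ‖scCoeff m j * ((j : ℝ) * y ^ (j - 1))‖
          ≤ (1 / (j.factorial : ℝ)) * ((j : ℝ) * R ^ (j - 1)) := by
        rw [norm_mul, norm_mul]
        apply mul_le_mul (abs_scCoeff_le m j) ?_ (by positivity) (by positivity)
        rw [norm_pow, Real.norm_natCast]
        exact mul_le_mul_of_nonneg_left (pow_le_pow_left₀ (abs_nonneg y) hyR _)
          (by positivity)
      refine h1.trans ?_
      rw [hu_def]
      rw [one_div_mul_eq_div, div_le_div_iff₀ (by positivity) (by positivity)]
      rw [mul_comm ((2*R)^j) _, mul_comm ((j:ℝ) * R ^ (j-1)) _]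
      apply mul_le_mul_of_nonneg_left ?_ (by positivity)
      have h2 : (j : ℝ) * R ^ (j - 1) ≤ (2 : ℝ) ^ j * R ^ j := by
        apply mul_le_mul
        · exact_mod_cast (Nat.lt_two_pow_self (n := j)).le
        · exact pow_le_pow_right₀ hR1 (Nat.sub_le j 1)
        · positivity
        · positivity
      calc (j : ℝ) * R ^ (j - 1) ≤ (2:ℝ)^j * R^j := h2
        _ = (2 * R) ^ j := by rw [mul_pow]
      
    have htmem : t ∈ Set.Ioo (-R) R := by
      constructor <;> [nlinarith [abs_nonneg t, neg_abs_le t]; nlinarith [le_abs_self t]]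
    have hDeriv : HasDerivAt (fun z => ∑' j, scCoeff m j * z ^ j)
        (∑' j, scCoeff m j * ((j : ℝ) * t ^ (j - 1))) t := by
      apply hasDerivAt_tsum_of_isPreconnected hu isOpen_Ioo
        (convex_Ioo _ _).isPreconnected
        (fun j y _ => (hasDerivAt_pow j y).const_mul (scCoeff m j))
        hbound htmem ((IH t).summable) htmem
    have hfun : iteratedDeriv m sinc' = fun z => ∑' j, scCoeff m j * z ^ j := by
      funext z; exact (IH z).tsum_eq.symm
    have hsum' : Summable (fun j => scCoeff m j * ((j : ℝ) * t ^ (j - 1))) :=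
      hu.of_norm_bounded (fun j => hbound j t htmem)
    have key : iteratedDeriv (m + 1) sinc' t
        = ∑' j, scCoeff m j * ((j : ℝ) * t ^ (j - 1)) := by
      rw [iteratedDeriv_succ, hfun]
      exact hDeriv.deriv
    rw [key]
    set f' : ℕ → ℝ := fun j => scCoeff m j * ((j : ℝ) * t ^ (j - 1)) with hf'
    have hf0 : f' 0 = 0 := by simp [hf']
    have hshift : HasSum (fun j => f' (j + 1)) (∑' j, f' j) := by
      rw [hasSum_nat_add_iff 1]
      simpa [hf0] using hsum'.hasSum
    have heq : (fun j => f' (j + 1)) = fun j => scCoeff (m + 1) j * t ^ j := by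
      funext j
      rw [hf']
      simp only [Nat.add_sub_cancel, scCoeff_succ]
      push_cast
      ring
    rwa [heq] at hshift

lemma scCoeff_partial_sum (m N : ℕ) (hmN : m ≤ 2 * N) (t : ℝ) :
    ∑ k ∈ Finset.Icc ((m + 1) / 2) N,
        (-1 : ℝ) ^ k * t ^ (2 * k - m) / (((2 * k - m).factorial : ℝ) * (2 * k + 1))
      = ∑ j ∈ Finset.range (2 * N + 2 - m), scCoeff m j * t ^ j := by
  rw [← Finset.sum_filter_of_ne (p := fun j => Even (j + m))
    (f := fun j => scCoeff m j * t ^ j)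
    (by
      intro j _ hne
      by_contra hodd
      have hodd' : ¬ Even (j + m) := by simpa using hodd
      exact hne (by simp only [scCoeff, if_neg hodd', zero_mul]))]
  refine Finset.sum_nbij' (fun k => 2 * k - m) (fun j => (j + m) / 2) ?_ ?_ ?_ ?_ ?_
  · intro k hk
    simp only [Finset.mem_Icc] at hk
    simp only [Finset.mem_filter, Finset.mem_range]
    refine ⟨by omega, ?_⟩
    have h1 : 2 * k - m + m = 2 * k := by omega
    rw [h1]; exact ⟨k, by omega⟩
  · intro j hj
    simp only [Finset.mem_filter, Finset.mem_range] at hj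
    obtain ⟨hjlt, r, hr⟩ := hj
    simp only [Finset.mem_Icc]
    omega
  · intro k hk
    simp only [Finset.mem_Icc] at hk
    omega
  · intro j hj
    simp only [Finset.mem_filter, Finset.mem_range] at hj
    obtain ⟨hjlt, r, hr⟩ := hj
    omega
  · intro k hk
    simp only [Finset.mem_Icc] at hk
    have h2k : m ≤ 2 * k := by omega
    have hjm : 2 * k - m + m = 2 * k := by omega
    rw [scCoeff, hjm, if_pos ⟨k, by omega⟩]
    rw [Nat.mul_div_cancel_left k (by norm_num)]
    have hfac : ((2 * k - m).factorial : ℝ) * ((2 * k).descFactorial m : ℝ)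
        = ((2 * k).factorial : ℝ) := by
      exact_mod_cast congrArg (Nat.cast (R := ℝ)) (Nat.factorial_mul_descFactorial h2k)
    have hsucc : ((2 * k + 1).factorial : ℝ) = ((2 * k : ℕ) + 1 : ℝ) * ((2 * k).factorial : ℝ) := by
      rw [Nat.factorial_succ]; push_cast; ring
    rw [hsucc]
    have h1 : (0:ℝ) < ((2 * k - m).factorial : ℝ) := by positivity
    have h2 : (0:ℝ) < ((2 * k).factorial : ℝ) := by positivity
    have h3 : (0:ℝ) < 2*(k:ℝ)+1 := by positivity
    field_simp
    push_cast at hfac ⊢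
    rw [← hfac]; ring

set_option maxHeartbeats 1000000 in
lemma sinc_tail_bound (m J : ℕ) (t : ℝ) (ht : 0 ≤ t) :
    |iteratedDeriv m sinc' t - ∑ j ∈ Finset.range J, scCoeff m j * t ^ j|
      ≤ Real.exp t * t ^ J / (J.factorial : ℝ) := by
  have h := hasSum_iteratedDeriv_sinc m t
  have hsum := h.summable
  have htail : iteratedDeriv m sinc' t - ∑ j ∈ Finset.range J, scCoeff m j * t ^ j
      = ∑' j, scCoeff m (j + J) * t ^ (j + J) := by
    have := hsum.sum_add_tsum_nat_add J
    rw [h.tsum_eq] at this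
    linarith [this]
  rw [htail]
  -- bound each term
  have hb : ∀ j : ℕ, |scCoeff m (j + J) * t ^ (j + J)|
      ≤ (t ^ J / (J.factorial : ℝ)) * (t ^ j / (j.factorial : ℝ)) := by
    intro j
    rw [abs_mul]
    have h1 : |t ^ (j + J)| = t ^ (j + J) := abs_of_nonneg (by positivity)
    rw [h1]
    have h2 : |scCoeff m (j + J)| * t ^ (j + J) ≤ (1 / ((j + J).factorial : ℝ)) * t ^ (j + J) :=
      mul_le_mul_of_nonneg_right (abs_scCoeff_le m (j + J)) (by positivity)
    refine h2.trans ?_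
    have h3 : ((J.factorial : ℝ)) * (j.factorial : ℝ) ≤ ((j + J).factorial : ℝ) := by
      rw [add_comm j J]
      exact_mod_cast Nat.le_of_dvd (Nat.factorial_pos _)
        (Nat.factorial_mul_factorial_dvd_factorial_add J j)
    have h4 : (1 : ℝ) / ((j + J).factorial : ℝ) ≤ 1 / ((J.factorial : ℝ) * (j.factorial : ℝ)) := by
      apply one_div_le_one_div_of_le (by positivity) h3
    calc (1 / ((j + J).factorial : ℝ)) * t ^ (j + J)
        ≤ (1 / ((J.factorial : ℝ) * (j.factorial : ℝ))) * t ^ (j + J) :=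
          mul_le_mul_of_nonneg_right h4 (by positivity)
      _ = (t ^ J / (J.factorial : ℝ)) * (t ^ j / (j.factorial : ℝ)) := by
          rw [pow_add]; field_simp
  have hsumg : Summable (fun j : ℕ => (t ^ J / (J.factorial : ℝ)) * (t ^ j / (j.factorial : ℝ))) :=
    (Real.summable_pow_div_factorial t).mul_left _
  have hsumf : Summable (fun j : ℕ => scCoeff m (j + J) * t ^ (j + J)) :=
    (summable_nat_add_iff J).mpr hsum
  have hsumfa : Summable (fun j : ℕ => |scCoeff m (j + J) * t ^ (j + J)|) := hsumf.abs
  calc |∑' j, scCoeff m (j + J) * t ^ (j + J)|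
      ≤ ∑' j, |scCoeff m (j + J) * t ^ (j + J)| := by
        have hn : Summable fun j : ℕ => ‖scCoeff m (j + J) * t ^ (j + J)‖ := by
          simpa only [Real.norm_eq_abs] using hsumfa
        simpa only [Real.norm_eq_abs] using norm_tsum_le_tsum_norm hn
    _ ≤ ∑' j, (t ^ J / (J.factorial : ℝ)) * (t ^ j / (j.factorial : ℝ)) := by
        exact Summable.tsum_le_tsum hb hsumfa hsumg
    _ = (t ^ J / (J.factorial : ℝ)) * ∑' j, t ^ j / (j.factorial : ℝ) := tsum_mul_left
    _ = Real.exp t * t ^ J / (J.factorial : ℝ) := by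
        rw [Real.exp_eq_exp_ℝ, NormedSpace.exp_eq_tsum_div]
        ring

/-- Remainder bound for the Taylor-series computation of the `m`-th derivative of
`sin t / t`: for `2N ≥ m` and `t ≥ 0`,
`|(1/m!) f⁽ᵐ⁾(t) - S_f(t;N,m)| ≤ (1/m!) eᵗ t^{2N+2-m}/(2N+2-m)!`. -/
theorem sinc_deriv_partial_sum_bound (m N : ℕ) (hmN : m ≤ 2 * N) (t : ℝ) (ht : 0 ≤ t) :
    |(1 / (m.factorial : ℝ)) * iteratedDeriv m sinc' t -
        (1 / (m.factorial : ℝ)) * ∑ k ∈ Finset.Icc ((m + 1) / 2) N,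
          (-1 : ℝ) ^ k * t ^ (2 * k - m) /
            (((2 * k - m).factorial : ℝ) * (2 * k + 1))| ≤
      (1 / (m.factorial : ℝ)) * Real.exp t * t ^ (2 * N + 2 - m) /
        ((2 * N + 2 - m).factorial : ℝ) := by
  rw [scCoeff_partial_sum m N hmN t, ← mul_sub, abs_mul,
    abs_of_nonneg (by positivity : (0:ℝ) ≤ 1 / (m.factorial : ℝ))]
  have hb := sinc_tail_bound m (2 * N + 2 - m) t ht
  calc (1 / (m.factorial : ℝ)) *
        |iteratedDeriv m sinc' t - ∑ j ∈ Finset.range (2 * N + 2 - m), scCoeff m j * t ^ j|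
      ≤ (1 / (m.factorial : ℝ)) *
        (Real.exp t * t ^ (2 * N + 2 - m) / ((2 * N + 2 - m).factorial : ℝ)) :=
        mul_le_mul_of_nonneg_left hb (by positivity)
    _ = (1 / (m.factorial : ℝ)) * Real.exp t * t ^ (2 * N + 2 - m) /
        ((2 * N + 2 - m).factorial : ℝ) := by ring
end

section
/- Let g(t) = log(1+t)/t for t ∈ (−1, 1), t ≠ 0, and g(0) = 1. For integers N ≥ m ≥ 0 and t ∈ (−1, 1), define E_g(t; N, m) = (−1)^m ∑_{k=N+1}^∞ (−1)^k C(k+m, m) t^k/(k+m+1), the tail of the series (1/m!) g⁽ᵐ⁾(t) = (−1)^m ∑_{k≥0} (−1)^k C(k+m, m) t^k/(k+m+1). Then |E_g(t; N, 0)| ≤ |t|^{N+1}/(1−|t|)^{N+2}, and for m ≥ 1, |E_g(t; N, m)| ≤ (2e/m)^m · m! · C(m+N+1, m) · |t|^{N+1}/(1−|t|)^{m+N+2}. -/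
set_option maxHeartbeats 1000000


open Real Finset

/-- The tail `E_g(t; N, m)` of the series
`(1/m!) g⁽ᵐ⁾(t) = (-1)^m ∑_{k≥0} (-1)^k C(k+m,m) t^k/(k+m+1)`
for `g(t) = log(1+t)/t`, starting at index `k = N+1`. -/
noncomputable def Eg (t : ℝ) (N m : ℕ) : ℝ :=
  (-1 : ℝ) ^ m * ∑' k : ℕ,
    (-1 : ℝ) ^ (N + 1 + k) * ((N + 1 + k + m).choose m : ℝ) *
      t ^ (N + 1 + k) / (N + 1 + k + m + 1 : ℝ)

lemma choose_trinomial_le (m N k : ℕ) :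
    (N + 1 + k + m).choose m ≤ (m + N + 1).choose m * (k + (m + N + 1)).choose (m + N + 1) := by
  have h := Nat.choose_mul (n := k + m + N + 1) (k := m + N + 1) (s := m)
    (by omega)
  have e1 : k + m + N + 1 - m = k + N + 1 := by omega
  have e2 : m + N + 1 - m = N + 1 := by omega
  rw [e1, e2] at h
  have hp : 1 ≤ (k + N + 1).choose (N + 1) := Nat.choose_pos (by omega)
  have e3 : N + 1 + k + m = k + m + N + 1 := by omega
  have e4 : k + (m + N + 1) = k + m + N + 1 := by omega
  calc (N + 1 + k + m).choose m = (k + m + N + 1).choose m := by rw [e3]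
    _ ≤ (k + m + N + 1).choose m * (k + N + 1).choose (N + 1) :=
        Nat.le_mul_of_pos_right _ hp
    _ = (k + m + N + 1).choose (m + N + 1) * (m + N + 1).choose m := h.symm
    _ = (m + N + 1).choose m * (k + (m + N + 1)).choose (m + N + 1) := by
        rw [mul_comm, e4]

lemma Eg_key (m N : ℕ) (t : ℝ) (ht : |t| < 1) :
    |Eg t N m| ≤ ((m + N + 1).choose m : ℝ) * |t| ^ (N + 1) / (1 - |t|) ^ (m + N + 2) := by
  set x := |t| with hx
  have hx0 : 0 ≤ x := abs_nonneg t
  have hx1 : (0:ℝ) < 1 - x := by linarith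
  have hnorm : ‖x‖ < 1 := by rwa [Real.norm_eq_abs, abs_abs]
  set r := m + N + 1 with hr
  have hsum : Summable (fun k : ℕ ↦ ((k + r).choose r : ℝ) * x ^ k) :=
    summable_choose_mul_geometric_of_norm_lt_one r hnorm
  have hgsum : Summable (fun k : ℕ ↦
      ((r.choose m : ℝ) * x ^ (N + 1)) * (((k + r).choose r : ℝ) * x ^ k)) :=
    hsum.mul_left _
  set f : ℕ → ℝ := fun k ↦ (-1 : ℝ) ^ (N + 1 + k) * ((N + 1 + k + m).choose m : ℝ) *
      t ^ (N + 1 + k) / (N + 1 + k + m + 1 : ℝ) with hf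
  have hterm : ∀ k, |f k| ≤ ((r.choose m : ℝ) * x ^ (N + 1)) *
      (((k + r).choose r : ℝ) * x ^ k) := by
    intro k
    have hd : (1:ℝ) ≤ (N + 1 + k + m + 1 : ℝ) := by
      have h1 := Nat.cast_nonneg (α := ℝ) N
      have h2 := Nat.cast_nonneg (α := ℝ) k
      have h3 := Nat.cast_nonneg (α := ℝ) m
      linarith
    have h1 : |f k| = ((N + 1 + k + m).choose m : ℝ) * x ^ (N + 1 + k) /
        (N + 1 + k + m + 1 : ℝ) := by
      rw [hf]
      rw [abs_div, abs_mul, abs_mul, abs_pow, abs_pow, abs_neg, abs_one, one_pow, one_mul,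
        Nat.abs_cast]
      congr 1
      rw [abs_of_pos (by positivity)]
    rw [h1]
    have h2 : ((N + 1 + k + m).choose m : ℝ) * x ^ (N + 1 + k) / (N + 1 + k + m + 1 : ℝ) ≤
        ((N + 1 + k + m).choose m : ℝ) * x ^ (N + 1 + k) := by
      apply div_le_self (by positivity) hd
    refine h2.trans ?_
    have h3 : ((N + 1 + k + m).choose m : ℝ) ≤ (r.choose m : ℝ) * ((k + r).choose r : ℝ) := by
      rw [← Nat.cast_mul]
      exact_mod_cast choose_trinomial_le m N k
    calc ((N + 1 + k + m).choose m : ℝ) * x ^ (N + 1 + k)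
        ≤ ((r.choose m : ℝ) * ((k + r).choose r : ℝ)) * x ^ (N + 1 + k) := by
          apply mul_le_mul_of_nonneg_right h3 (by positivity)
      _ = ((r.choose m : ℝ) * x ^ (N + 1)) * (((k + r).choose r : ℝ) * x ^ k) := by
          rw [pow_add]; ring
  have hfs : Summable fun k ↦ |f k| :=
    Summable.of_nonneg_of_le (fun k ↦ abs_nonneg _) hterm hgsum
  have hEg : |Eg t N m| = |∑' k, f k| := by
    rw [Eg, hf]
    rw [abs_mul, abs_pow, abs_neg, abs_one, one_pow, one_mul]
  rw [hEg]
  have h4 : |∑' k, f k| ≤ ∑' k, |f k| := by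
    have := norm_tsum_le_tsum_norm (f := f) (by simpa [Real.norm_eq_abs] using hfs)
    simpa [Real.norm_eq_abs] using this
  refine h4.trans ?_
  have h5 : ∑' k, |f k| ≤ ∑' k, ((r.choose m : ℝ) * x ^ (N + 1)) *
      (((k + r).choose r : ℝ) * x ^ k) := hfs.tsum_le_tsum hterm hgsum
  refine h5.trans ?_
  rw [tsum_mul_left, tsum_choose_mul_geometric_of_norm_lt_one r hnorm]
  have : (m + N + 2) = r + 1 := by omega
  rw [this]
  rw [mul_div_assoc, mul_one_div]
  apply le_of_eq
  ring

/-- Bounds for the tail of the series of `(1/m!) g⁽ᵐ⁾(t)` with `g(t) = log(1+t)/t`: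
`|E_g(t;N,0)| ≤ |t|^{N+1}/(1-|t|)^{N+2}` and, for `m ≥ 1`,
`|E_g(t;N,m)| ≤ (2e/m)^m m! C(m+N+1,m) |t|^{N+1}/(1-|t|)^{m+N+2}`. -/
theorem Eg_bound (m N : ℕ) (hmN : m ≤ N) (t : ℝ) (ht : |t| < 1) :
    (m = 0 → |Eg t N 0| ≤ |t| ^ (N + 1) / (1 - |t|) ^ (N + 2)) ∧
    (1 ≤ m → |Eg t N m| ≤
      (2 * Real.exp 1 / m) ^ m * (m.factorial : ℝ) * ((m + N + 1).choose m : ℝ) *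
        |t| ^ (N + 1) / (1 - |t|) ^ (m + N + 2)) := by
  have hx1 : (0:ℝ) < 1 - |t| := by linarith [abs_nonneg t]
  constructor
  · intro _
    have h := Eg_key 0 N t ht
    simpa using h
  · intro hm
    have h := Eg_key m N t ht
    have hmpos : (0:ℝ) < m := by exact_mod_cast hm
    have hK : (1:ℝ) ≤ (2 * Real.exp 1 / m) ^ m * (m.factorial : ℝ) := by
      rw [div_pow, div_mul_eq_mul_div, le_div_iff₀ (pow_pos hmpos m), one_mul]
      have h1 : (m:ℝ) ^ m / (m.factorial : ℝ) ≤ Real.exp m :=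
        Real.pow_div_factorial_le_exp (m:ℝ) hmpos.le m
      have h2 : (m:ℝ) ^ m ≤ Real.exp 1 ^ m * (m.factorial : ℝ) := by
        rw [← Real.exp_one_pow] at h1
        have := (div_le_iff₀ (by positivity : (0:ℝ) < (m.factorial : ℝ))).mp h1
        linarith
      calc (m:ℝ) ^ m ≤ Real.exp 1 ^ m * (m.factorial : ℝ) := h2
        _ ≤ (2 * Real.exp 1) ^ m * (m.factorial : ℝ) := by
            apply mul_le_mul_of_nonneg_right _ (by positivity)
            apply pow_le_pow_left₀ (by positivity)
            nlinarith [Real.exp_pos 1]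
    calc |Eg t N m| ≤ ((m + N + 1).choose m : ℝ) * |t| ^ (N + 1) / (1 - |t|) ^ (m + N + 2) := h
      _ ≤ (2 * Real.exp 1 / m) ^ m * (m.factorial : ℝ) * ((m + N + 1).choose m : ℝ) *
          |t| ^ (N + 1) / (1 - |t|) ^ (m + N + 2) := by
        apply div_le_div_of_nonneg_right _ (by positivity)
        have hCx : (0:ℝ) ≤ ((m + N + 1).choose m : ℝ) * |t| ^ (N + 1) := by positivity
        calc ((m + N + 1).choose m : ℝ) * |t| ^ (N + 1)
            = 1 * (((m + N + 1).choose m : ℝ) * |t| ^ (N + 1)) := (one_mul _).symm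
          _ ≤ (2 * Real.exp 1 / m) ^ m * (m.factorial : ℝ) *
              (((m + N + 1).choose m : ℝ) * |t| ^ (N + 1)) :=
            mul_le_mul_of_nonneg_right hK hCx
          _ = (2 * Real.exp 1 / m) ^ m * (m.factorial : ℝ) * ((m + N + 1).choose m : ℝ) *
              |t| ^ (N + 1) := by ring
end
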